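/- arXiv:2202.10147 — 4 statements merged into one kernel-verified Lean document; each statement's English description precedes it below -/
import Mathlib

section
/- Let Δ = ⟨F₁,...,F_k⟩ be a simplicial complex on [n] with facets F₁,...,F_k. Then removing F_k is a shelling move (i.e., ⟨F_k⟩ ∩ ⟨F₁,...,F_{k-1}⟩ is pure of dimension dim(F_k) − 1) if and only if the colon ideal (x_{\bar{F_1}},...,x_{\bar{F_{k-1}}}) : x_{\bar{F_k}} is generated by variables. -/
open MvPolynomial

/-- The monomial `x^u` in the polynomial ring `K[x_i : i ∈ σ]`. -/
noncomputable def mon (K : Type) [Field K] {σ : Type} (u : σ →₀ ℕ) :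
    MvPolynomial σ K := MvPolynomial.monomial u 1

/-- Total degree of an exponent vector. -/
def mdeg {σ : Type} (u : σ →₀ ℕ) : ℕ := u.sum fun _ e => e

/-- The monomial ideal generated by the monomials with exponent vectors in `S`. -/
noncomputable def monIdeal (K : Type) [Field K] {σ : Type} (S : Set (σ →₀ ℕ)) :
    Ideal (MvPolynomial σ K) := Ideal.span ((mon K) '' S)

/-- An ideal is generated by variables. -/
def genByVars {K : Type} [Field K] {σ : Type} (J : Ideal (MvPolynomial σ K)) : Prop :=
  ∃ A : Set σ, J = Ideal.span ((fun i => (X i : MvPolynomial σ K)) '' A)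

/-- An ideal is generated by linear forms. -/
def genByLinForms {K : Type} [Field K] {σ : Type} (J : Ideal (MvPolynomial σ K)) : Prop :=
  ∃ S : Set (MvPolynomial σ K), (∀ f ∈ S, f.IsHomogeneous 1) ∧ J = Ideal.span S

/-- `S` is an antichain under divisibility of monomials, i.e. it is the minimal
monomial generating set `G(I)` of the monomial ideal `I` it generates. -/
def IsMinGenSet {σ : Type} (S : Set (σ →₀ ℕ)) : Prop :=
  ∀ u ∈ S, ∀ v ∈ S, u ≤ v → u = v

/-- A monomial ideal, presented by its minimal monomial generating set `S`, is
quasi-linear if for every `u ∈ S` the colon ideal `(G(I) \ {u}) : u` is generated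
by variables. -/
def QuasiLinear (K : Type) [Field K] {σ : Type} (S : Set (σ →₀ ℕ)) : Prop :=
  ∀ u ∈ S, genByVars (Submodule.colon (monIdeal K (S \ {u})) (Ideal.span {mon K u}))

/-- A minimal graded free resolution of an ideal `I` in a polynomial ring:
graded free modules `F i = ⊕_k R(-dg i k)` of rank `b i`, differentials
`F (i+1) → F i` given by the matrices `A i`, whose entries are homogeneous of the
appropriate degree and of positive degree (this is minimality, i.e. all entries lie
in the graded maximal ideal), together with an augmentation `F 0 → I` given by the
homogeneous generators `g`, everything being exact. -/
structure MinFreeRes {K : Type} [Field K] {σ : Type} (I : Ideal (MvPolynomial σ K)) where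
  b : ℕ → ℕ
  dg : (i : ℕ) → Fin (b i) → ℕ
  g : Fin (b 0) → MvPolynomial σ K
  A : (i : ℕ) → Matrix (Fin (b i)) (Fin (b (i+1))) (MvPolynomial σ K)
  g_hom : ∀ k, (g k).IsHomogeneous (dg 0 k)
  A_hom : ∀ i k l, A i k l = 0 ∨
    ((A i k l).IsHomogeneous (dg (i+1) l - dg i k) ∧ dg i k < dg (i+1) l)
  aug_range : LinearMap.range (Fintype.linearCombination (MvPolynomial σ K)
      g) = I
  aug_exact : LinearMap.ker (Fintype.linearCombination (MvPolynomial σ K)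
      g) = LinearMap.range ((A 0).mulVecLin)
  is_exact : ∀ i, LinearMap.ker ((A i).mulVecLin) = LinearMap.range ((A (i+1)).mulVecLin)

/-- The graded Betti number `β_{i,j}` read off from a minimal graded free resolution:
the number of generators of the `i`-th free module of degree `j`. -/
noncomputable def MinFreeRes.beta {K : Type} [Field K] {σ : Type}
    {I : Ideal (MvPolynomial σ K)} (res : MinFreeRes I) (i j : ℕ) : ℕ :=
  (Finset.univ.filter fun k => res.dg i k = j).card

/-- `I` has a `d`-linear resolution: it has a minimal graded free resolution in which the
`i`-th free module is generated entirely in degree `i + d`, i.e. `β_{i,j}(I) = 0`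
whenever `j - i ≠ d`. -/
def HasLinRes {K : Type} [Field K] {σ : Type} (I : Ideal (MvPolynomial σ K))
    (d : ℕ) : Prop :=
  ∃ res : MinFreeRes I, ∀ i k, res.dg i k = i + d

/-- `reg I ≤ r`: a minimal graded free resolution of `I` has all generators of the
`i`-th free module in degrees `≤ i + r`, i.e. `β_{i,j}(I) = 0` whenever `j - i > r`. -/
def RegLE {K : Type} [Field K] {σ : Type} (I : Ideal (MvPolynomial σ K)) (r : ℕ) : Prop :=
  ∃ res : MinFreeRes I, ∀ i k, res.dg i k ≤ i + r

/-- The squarefree exponent vector of a subset `s ⊆ [n]`, i.e. `x_s = ∏_{i ∈ s} x_i`. -/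
noncomputable def expOf {n : ℕ} (s : Finset (Fin n)) : Fin n →₀ ℕ :=
  ∑ i ∈ s, Finsupp.single i 1

lemma expOf_apply {n : ℕ} (s : Finset (Fin n)) (i : Fin n) :
    expOf s i = if i ∈ s then 1 else 0 := by
  classical
  simp [expOf, Finsupp.finset_sum_apply, Finsupp.single_apply]

lemma mem_monSpan {K : Type} [Field K] {σ : Type} {ι : Type} (φ : ι → (σ →₀ ℕ))
    (S : Set ι) (f : MvPolynomial σ K) :
    f ∈ Ideal.span ((fun j => mon K (φ j)) '' S) ↔
      ∀ w ∈ f.support, ∃ j ∈ S, φ j ≤ w := by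
  have h : ((fun j => mon K (φ j)) '' S) = ((fun e => monomial e (1:K)) '' (φ '' S)) := by
    rw [Set.image_image]; rfl
  rw [h, MvPolynomial.mem_ideal_span_monomial_image]
  constructor
  · intro H w hw
    obtain ⟨si, ⟨j, hj, rfl⟩, hle⟩ := H w hw
    exact ⟨j, hj, hle⟩
  · intro H w hw
    obtain ⟨j, hj, hle⟩ := H w hw
    exact ⟨φ j, ⟨j, hj, rfl⟩, hle⟩

/-- Let `Δ = ⟨F_0, …, F_k⟩` be a simplicial complex on `[n]` with facets
`F_0, …, F_k` (pairwise incomparable).  Then removing the last facet `F_k` is a shelling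
move, i.e. `⟨F_k⟩ ∩ ⟨F_0, …, F_{k-1}⟩` is pure of dimension `dim F_k − 1` (every maximal
face `G` of this intersection satisfies `|G| = |F_k| − 1`), if and only if the colon
ideal `(x_{F̄_0}, …, x_{F̄_{k-1}}) : x_{F̄_k}` is generated by variables. -/
theorem stmt_0 {K : Type} [Field K] {n k : ℕ} (F : Fin (k + 1) → Finset (Fin n))
    (hfacets : ∀ i j, F i ⊆ F j → i = j) :
    (∀ G : Finset (Fin n),
        Maximal (fun H => H ⊆ F (Fin.last k) ∧ ∃ j, j ≠ Fin.last k ∧ H ⊆ F j) G →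
        G.card + 1 = (F (Fin.last k)).card)
    ↔ genByVars (Submodule.colon
        (Ideal.span ((fun j => mon K (expOf ((F j)ᶜ))) '' {j | j ≠ Fin.last k}))
        (Ideal.span {mon K (expOf ((F (Fin.last k))ᶜ))})) := by
  classical
  set L := Fin.last k with hLdef
  set v : Fin n →₀ ℕ := expOf ((F L)ᶜ) with hv
  set φ : Fin (k+1) → (Fin n →₀ ℕ) := fun j => expOf ((F j)ᶜ) with hφ
  set I : Ideal (MvPolynomial (Fin n) K) :=
    Ideal.span ((fun j => mon K (φ j)) '' {j | j ≠ L}) with hI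
  -- the intermediate combinatorial condition
  have vL : ∀ x, x ∈ F L → v x = 0 := by
    intro x hx; rw [hv, expOf_apply, if_neg (by simp [hx])]
  have hQne : ∀ j' : Fin (k+1), j' ≠ L → (F L \ F j').Nonempty := by
    intro j' hj'
    rw [Finset.sdiff_nonempty]
    intro hsub
    exact hj' ((hfacets L j' hsub).symm)
  constructor
  · -- shelling condition → genByVars
    intro hmax
    -- first extract the key combinatorial fact
    have hQ : ∀ j : Fin (k+1), j ≠ L → ∃ j' i, j' ≠ L ∧ F L \ F j' = {i} ∧ i ∈ F L \ F j := by
      intro j hj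
      set T := ((F L).powerset.filter
        (fun H => (∃ j', j' ≠ L ∧ H ⊆ F j') ∧ F L ∩ F j ⊆ H)) with hT
      have hmemT : F L ∩ F j ∈ T := by
        rw [hT, Finset.mem_filter, Finset.mem_powerset]
        exact ⟨Finset.inter_subset_left, ⟨j, hj, Finset.inter_subset_right⟩, subset_rfl⟩
      obtain ⟨G, hGT, hGm⟩ := T.exists_maximal ⟨_, hmemT⟩
      rw [hT, Finset.mem_filter, Finset.mem_powerset] at hGT
      obtain ⟨hGL, ⟨j', hj', hGj'⟩, hjG⟩ := hGT
      have hGmax : Maximal (fun H => H ⊆ F L ∧ ∃ j₀, j₀ ≠ L ∧ H ⊆ F j₀) G := by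
        refine ⟨⟨hGL, j', hj', hGj'⟩, ?_⟩
        intro H hH hGH
        have hHT : H ∈ T := by
          rw [hT, Finset.mem_filter, Finset.mem_powerset]
          exact ⟨hH.1, hH.2, hjG.trans hGH⟩
        by_contra hHG
        exact hHG (hGm hHT hGH)
      have hcard := hmax G hGmax
      -- G = F L ∩ F j'
      have hGsub : G ⊆ F L ∩ F j' := Finset.subset_inter hGL hGj'
      have hne : F L ∩ F j' ≠ F L := by
        intro h
        exact hj' ((hfacets L j' (fun x hx => (Finset.mem_inter.mp (h ▸ hx)).2)).symm)
      have hcard2 : (F L ∩ F j').card < (F L).card :=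
        Finset.card_lt_card (lt_of_le_of_ne Finset.inter_subset_left hne)
      have hGeq : G = F L ∩ F j' :=
        Finset.eq_of_subset_of_card_le hGsub (by omega)
      have hsd : (F L \ F j').card = 1 := by
        have h3 := congrArg Finset.card hGeq
        have := Finset.card_inter_add_card_sdiff (F L) (F j')
        omega
      obtain ⟨i, hi⟩ := Finset.card_eq_one.mp hsd
      refine ⟨j', i, hj', hi, ?_⟩
      have : F L \ F j' ⊆ F L \ F j := by
        have h1 : F L ∩ F j ⊆ F L ∩ F j' := hjG.trans (hGeq ▸ subset_rfl)
        intro x hx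
        rw [Finset.mem_sdiff] at hx ⊢
        refine ⟨hx.1, fun hxj => hx.2 (Finset.mem_inter.mp (h1 (Finset.mem_inter.mpr ⟨hx.1, hxj⟩))).2⟩
      exact this (hi ▸ Finset.mem_singleton_self i)
    -- now build the variable generating set
    refine ⟨{i | ∃ j', j' ≠ L ∧ F L \ F j' = {i}}, le_antisymm ?_ ?_⟩
    · intro f hf
      rw [Ideal.mem_colon_span_singleton, mem_monSpan] at hf
      rw [mem_ideal_span_X_image]
      intro m hm
      have hmv : m + v ∈ (f * mon K v).support := by
        rw [MvPolynomial.mem_support_iff, hv]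
        show coeff (m + expOf (F L)ᶜ) (f * monomial (expOf (F L)ᶜ) 1) ≠ 0
        rw [MvPolynomial.coeff_mul_monomial]
        simpa using MvPolynomial.mem_support_iff.mp hm
      obtain ⟨j, hj, hle⟩ := hf _ hmv
      obtain ⟨j', i, hj', hset, hi⟩ := hQ j hj
      refine ⟨i, ⟨j', hj', hset⟩, ?_⟩
      rw [Finset.mem_sdiff] at hi
      have h1 : φ j i = 1 := by rw [hφ, expOf_apply, if_pos (by simp [hi.2])]
      have h2 : v i = 0 := vL i hi.1
      have := hle i
      simp only [Finsupp.coe_add, Pi.add_apply] at this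
      omega
    · rw [Ideal.span_le]
      rintro _ ⟨i, ⟨j', hj', hset⟩, rfl⟩
      rw [SetLike.mem_coe, Ideal.mem_colon_span_singleton]
      have hX : (X i : MvPolynomial (Fin n) K) * mon K v = monomial (Finsupp.single i 1 + v) 1 := by
        rw [show (X i : MvPolynomial (Fin n) K) = monomial (Finsupp.single i 1) 1 from rfl]
        simp [mon, monomial_mul]
      rw [hX]
      rw [show I = Ideal.span ((fun j => mon K (φ j)) '' {j | j ≠ L}) from hI, mem_monSpan]
      intro w hw
      rw [MvPolynomial.support_monomial, if_neg one_ne_zero, Finset.mem_singleton] at hw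
      subst hw
      refine ⟨j', hj', ?_⟩
      intro x
      simp only [Finsupp.coe_add, Pi.add_apply]
      rw [hφ]
      rw [expOf_apply]
      by_cases hx : x ∈ F j'
      · rw [if_neg (by simp [hx])]; omega
      · rw [if_pos (by simp [hx])]
        by_cases hxL : x ∈ F L
        · have : x = i := by
            have : x ∈ F L \ F j' := Finset.mem_sdiff.mpr ⟨hxL, hx⟩
            rw [hset, Finset.mem_singleton] at this; exact this
          subst this
          simp [Finsupp.single_apply]
        · have : v x = 1 := by rw [hv, expOf_apply, if_pos (by simp [hxL])]
          omega
  · -- genByVars → shelling condition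
    rintro ⟨A, hA⟩ G hG
    obtain ⟨⟨hGL, j, hj, hGj⟩, hmaxG⟩ := hG
    -- Step 1: mon of x_{F L \ F j} is in the colon ideal
    have hmem1 : mon K (expOf (F L \ F j)) ∈ Submodule.colon I (Ideal.span {mon K v}) := by
      rw [Ideal.mem_colon_span_singleton]
      have hX : mon K (expOf (F L \ F j)) * mon K v
          = monomial (expOf (F L \ F j) + v) (1:K) := by simp [mon, monomial_mul]
      rw [hX, hI, mem_monSpan]
      intro w hw
      rw [MvPolynomial.support_monomial, if_neg one_ne_zero, Finset.mem_singleton] at hw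
      subst hw
      refine ⟨j, hj, ?_⟩
      intro x
      simp only [Finsupp.coe_add, Pi.add_apply]
      rw [hφ, expOf_apply, expOf_apply]
      by_cases hx : x ∈ F j
      · rw [if_neg (by simp [hx])]; omega
      · rw [if_pos (by simp [hx])]
        by_cases hxL : x ∈ F L
        · rw [if_pos (Finset.mem_sdiff.mpr ⟨hxL, hx⟩)]; omega
        · have : v x = 1 := by rw [hv, expOf_apply, if_pos (by simp [hxL])]
          omega
    rw [hA, mem_ideal_span_X_image] at hmem1
    obtain ⟨i, hiA, hine⟩ := hmem1 (expOf (F L \ F j))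
      (by rw [mon, MvPolynomial.support_monomial, if_neg one_ne_zero]; exact Finset.mem_singleton_self _)
    have hiFLj : i ∈ F L \ F j := by
      by_contra h
      rw [expOf_apply, if_neg h] at hine
      exact hine rfl
    -- Step 2: X i in the colon ideal gives a facet F j' with F L \ F j' = {i}
    have hmem2 : (X i : MvPolynomial (Fin n) K) ∈ Submodule.colon I (Ideal.span {mon K v}) := by
      rw [hA]
      exact Ideal.subset_span ⟨i, hiA, rfl⟩
    rw [Ideal.mem_colon_span_singleton] at hmem2
    have hX : (X i : MvPolynomial (Fin n) K) * mon K v = monomial (Finsupp.single i 1 + v) 1 := by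
      rw [show (X i : MvPolynomial (Fin n) K) = monomial (Finsupp.single i 1) 1 from rfl]
      simp [mon, monomial_mul]
    rw [hX, hI, mem_monSpan] at hmem2
    obtain ⟨j', hj', hle⟩ := hmem2 (Finsupp.single i 1 + v)
      (by rw [MvPolynomial.support_monomial, if_neg one_ne_zero]; exact Finset.mem_singleton_self _)
    have hset : F L \ F j' = {i} := by
      rw [Finset.eq_singleton_iff_nonempty_unique_mem]
      refine ⟨hQne j' hj', ?_⟩
      intro x hx
      rw [Finset.mem_sdiff] at hx
      have := hle x
      simp only [Finsupp.coe_add, Pi.add_apply] at this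
      rw [hφ, expOf_apply, if_pos (by simp [hx.2])] at this
      rw [vL x hx.1] at this
      by_contra hne
      rw [Finsupp.single_apply, if_neg (fun h => hne h.symm)] at this
      omega
    -- Step 3: use maximality of G
    have hGsub : G ⊆ F L ∩ F j' := by
      intro x hx
      refine Finset.mem_inter.mpr ⟨hGL hx, ?_⟩
      by_contra hxn
      have hx2 : x ∈ F L \ F j' := Finset.mem_sdiff.mpr ⟨hGL hx, hxn⟩
      rw [hset, Finset.mem_singleton] at hx2
      subst hx2
      exact (Finset.mem_sdiff.mp hiFLj).2 (hGj hx)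
    have hle2 := hmaxG ⟨Finset.inter_subset_left, j', hj', Finset.inter_subset_right⟩ hGsub
    have hGeq : G = F L ∩ F j' := le_antisymm hGsub hle2
    have hcards := Finset.card_inter_add_card_sdiff (F L) (F j')
    rw [hset, Finset.card_singleton] at hcards
    rw [hGeq]
    omega
end

section
/- Every monomial ideal of K[x₁,...,x_n] that has a linear resolution is quasi-linear. -/
open MvPolynomial

lemma mdeg_eq_degree {σ : Type} (u : σ →₀ ℕ) : mdeg u = u.degree := by
  simp [mdeg, Finsupp.degree, Finsupp.sum]
  rfl

lemma mdeg_add {σ : Type} (a b : σ →₀ ℕ) : mdeg (a + b) = mdeg a + mdeg b :=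
  Finsupp.sum_add_index' (fun _ => rfl) (fun _ _ _ => rfl)

lemma mdeg_eq_zero {σ : Type} {a : σ →₀ ℕ} (h : mdeg a = 0) : a = 0 := by
  ext i
  show a i = 0
  by_contra hi
  have hmem : i ∈ a.support := Finsupp.mem_support_iff.mpr hi
  have : a i ≤ mdeg a := by
    rw [mdeg_eq_degree]
    exact Finset.single_le_sum (fun _ _ => Nat.zero_le _) hmem
  omega

lemma le_mdeg_eq {σ : Type} {a b : σ →₀ ℕ} (hle : a ≤ b) (h : mdeg a = mdeg b) : a = b := by
  have hb : b = a + (b - a) := (tsub_add_cancel_of_le hle).symm.trans (add_comm _ _)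
  have := mdeg_add a (b - a)
  rw [← hb] at this
  have h0 : mdeg (b - a) = 0 := by omega
  rw [hb, mdeg_eq_zero h0, add_zero]

lemma homog_mdeg {K : Type} [Field K] {σ : Type} {p : MvPolynomial σ K} {d : ℕ}
    (hp : p.IsHomogeneous d) {m : σ →₀ ℕ} (hm : coeff m p ≠ 0) : mdeg m = d := by
  have := hp hm
  simpa [mdeg, Finsupp.weight, Finsupp.linearCombination, Finsupp.sum] using this

lemma mdeg_one_single {σ : Type} {m : σ →₀ ℕ} (h : mdeg m = 1) :
    ∃ i, m = Finsupp.single i 1 := by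
  classical
  have hne : m.support.Nonempty := by
    by_contra hs
    rw [Finset.not_nonempty_iff_eq_empty] at hs
    have : m = 0 := by ext i; by_contra hi; exact absurd (Finsupp.mem_support_iff.mpr hi) (by simp [hs])
    simp [this, mdeg] at h
  obtain ⟨i, hi⟩ := hne
  refine ⟨i, ?_⟩
  have hdeg : ∑ j ∈ m.support, m j = 1 := by rw [← h]; rfl
  have hile : m i ≤ 1 := hdeg ▸ Finset.single_le_sum (fun _ _ => Nat.zero_le _) hi
  have hipos : m i ≠ 0 := Finsupp.mem_support_iff.mp hi
  have hmi : m i = 1 := by omega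
  ext j
  rcases eq_or_ne j i with rfl | hj
  · simp [hmi]
  · rw [Finsupp.single_apply, if_neg (Ne.symm hj)]
    by_contra hj0
    have hjmem : j ∈ m.support.erase i := Finset.mem_erase.mpr ⟨hj, Finsupp.mem_support_iff.mpr hj0⟩
    have h3 : m i + ∑ x ∈ m.support.erase i, m x = ∑ x ∈ m.support, m x :=
      Finset.add_sum_erase _ _ hi
    have h2 : m j ≤ ∑ x ∈ m.support.erase i, m x :=
      Finset.single_le_sum (fun _ _ => Nat.zero_le _) hjmem
    omega

lemma supp_div {K : Type} [Field K] {σ : Type} [DecidableEq σ] {S' : Set (σ →₀ ℕ)}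
    {f : MvPolynomial σ K} (hf : f ∈ monIdeal K S') {m : σ →₀ ℕ} (hm : coeff m f ≠ 0) :
    ∃ s ∈ S', s ≤ m := by
  induction hf using Submodule.span_induction generalizing m with
  | mem x hx =>
    obtain ⟨s, hs, rfl⟩ := hx
    refine ⟨s, hs, ?_⟩
    rw [mon, coeff_monomial] at hm
    split at hm
    · exact le_of_eq (by assumption)
    · exact absurd rfl hm
  | zero => simp at hm
  | add x y hx hy ihx ihy =>
    rw [coeff_add] at hm
    rcases (by by_contra hc; push_neg at hc; rw [hc.1, hc.2] at hm; simp at hm :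
      coeff m x ≠ 0 ∨ coeff m y ≠ 0) with h | h
    · exact ihx h
    · exact ihy h
  | smul a x hx ih =>
    rw [smul_eq_mul, coeff_mul] at hm
    obtain ⟨p, hp, hne⟩ := Finset.exists_ne_zero_of_sum_ne_zero hm
    have h2 : coeff p.2 x ≠ 0 := fun h => hne (by rw [h, mul_zero])
    obtain ⟨s, hs, hle⟩ := ih h2
    exact ⟨s, hs, hle.trans (Finset.HasAntidiagonal.mem_antidiagonal.mp hp ▸ le_add_self)⟩

lemma mon_div_mem {K : Type} [Field K] {σ : Type} {S' : Set (σ →₀ ℕ)} {s m : σ →₀ ℕ}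
    (hs : s ∈ S') (hle : s ≤ m) : mon K m ∈ monIdeal K S' := by
  have : mon K m = mon K (m - s) * mon K s := by
    rw [mon, mon, mon, monomial_mul, tsub_add_cancel_of_le hle, one_mul]
  rw [this]
  exact Ideal.mul_mem_left _ _ (Ideal.subset_span ⟨s, hs, rfl⟩)

lemma coeff_mul_homog {K : Type} [Field K] {σ : Type} [DecidableEq σ]
    {g : MvPolynomial σ K} {d : ℕ} (hg : g.IsHomogeneous d) (p : MvPolynomial σ K)
    {m : σ →₀ ℕ} (hm : mdeg m = d) : coeff m (p * g) = coeff 0 p * coeff m g := by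
  rw [coeff_mul]
  apply Finset.sum_eq_single (0, m)
  · rintro ⟨a, b⟩ hab hne
    by_cases hb : coeff b g = 0
    · rw [hb, mul_zero]
    · exfalso
      have hbd : mdeg b = d := homog_mdeg hg hb
      have habm : a + b = m := Finset.HasAntidiagonal.mem_antidiagonal.mp hab
      have : mdeg a + mdeg b = mdeg m := by rw [← mdeg_add, habm]
      have ha0 : a = 0 := mdeg_eq_zero (by omega)
      exact hne (by rw [ha0] at habm ⊢; rw [zero_add] at habm; rw [habm])
  · intro h
    exact absurd (Finset.HasAntidiagonal.mem_antidiagonal.mpr (zero_add m)) h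

lemma const_rep {K : Type} [Field K] {σ : Type} [DecidableEq σ] {N : ℕ}
    {g : Fin N → MvPolynomial σ K} {d : ℕ} (hg : ∀ k, (g k).IsHomogeneous d)
    {h : MvPolynomial σ K} (hh : h.IsHomogeneous d) {p : Fin N → MvPolynomial σ K}
    (hp : ∑ k, p k • g k = h) : ∑ k, C (coeff 0 (p k)) * g k = h := by
  apply MvPolynomial.ext
  intro m
  rw [coeff_sum]
  by_cases hmd : mdeg m = d
  · have : coeff m h = ∑ k, coeff 0 (p k) * coeff m (g k) := by
      rw [← hp, coeff_sum]
      exact Finset.sum_congr rfl fun k _ => by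
        rw [smul_eq_mul, coeff_mul_homog (hg k) _ hmd]
    rw [this]
    exact Finset.sum_congr rfl fun k _ => by rw [coeff_C_mul]
  · have hz : ∀ k, coeff m (g k) = 0 := fun k => by
      by_contra hc; exact hmd (homog_mdeg (hg k) hc)
    have : coeff m h = 0 := by by_contra hc; exact hmd (homog_mdeg hh hc)
    rw [this]
    exact Finset.sum_eq_zero fun k _ => by rw [coeff_C_mul, hz, mul_zero]

set_option maxHeartbeats 2000000 in
/-- Every monomial ideal (with minimal monomial generating set `S`)
that has a linear resolution is quasi-linear. -/
theorem stmt_3 {K : Type} [Field K] {n : ℕ} (S : Set (Fin n →₀ ℕ))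
    (hfin : S.Finite) (hmin : IsMinGenSet S)
    (hlin : ∃ d, HasLinRes (monIdeal K S) d) :
    QuasiLinear K S := by
  classical
  obtain ⟨d, res, hdg⟩ := hlin
  set R := MvPolynomial (Fin n) K with hR
  -- the generators of the resolution are homogeneous of degree d
  have hghom : ∀ k, (res.g k).IsHomogeneous d := by
    intro k; have := res.g_hom k; rwa [hdg, zero_add] at this
  -- each g k lies in I
  have hgI : ∀ k, res.g k ∈ monIdeal K S := by
    intro k
    have hmem : res.g k ∈ LinearMap.range (Fintype.linearCombination
        (MvPolynomial (Fin n) K) res.g) := by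
      refine ⟨Pi.single k 1, ?_⟩
      rw [Fintype.linearCombination_apply]
      simp [Pi.single_apply, ite_smul]
    rwa [res.aug_range] at hmem
  have hmemI : ∀ v ∈ S, mon K v ∈ monIdeal K S := fun v hv => Ideal.subset_span ⟨v, hv, rfl⟩
  -- every element of S has degree d
  have hmdeg : ∀ v ∈ S, mdeg v = d := by
    intro v hv
    have hv' : mon K v ∈ LinearMap.range (Fintype.linearCombination R res.g) := by
      rw [res.aug_range]; exact hmemI v hv
    obtain ⟨p, hp⟩ := hv'
    rw [Fintype.linearCombination_apply] at hp
    have hco : coeff v (∑ k, p k • res.g k) ≠ 0 := by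
      rw [hp]; simp [mon, coeff_monomial]
    rw [coeff_sum] at hco
    obtain ⟨k, _, hk⟩ := Finset.exists_ne_zero_of_sum_ne_zero hco
    rw [smul_eq_mul, coeff_mul] at hk
    obtain ⟨q, hq, hqne⟩ := Finset.exists_ne_zero_of_sum_ne_zero hk
    have h2 : coeff q.2 (res.g k) ≠ 0 := fun h => hqne (by rw [h, mul_zero])
    have hq2d : mdeg q.2 = d := homog_mdeg (hghom k) h2
    obtain ⟨s, hs, hsle⟩ := supp_div (hgI k) h2
    have hq2v : q.2 ≤ v := Finset.HasAntidiagonal.mem_antidiagonal.mp hq ▸ le_add_self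
    have hsv : s = v := hmin s hs v hv (hsle.trans hq2v)
    have : q.2 = v := le_antisymm hq2v (hsv ▸ hsle)
    rw [← this, hq2d]
  -- main part
  intro u hu
  set I' := monIdeal K (S \ {u}) with hI'
  set ι := {x // x ∈ hfin.toFinset} with hι
  have hmemS : ∀ v : ι, (v : Fin n →₀ ℕ) ∈ S := fun v => hfin.mem_toFinset.mp v.2
  set uS : ι := ⟨u, hfin.mem_toFinset.mpr hu⟩ with huS
  set N := res.b 0 with hN
  set Cm : Fin N → ι → K := fun k v => coeff (v : Fin n →₀ ℕ) (res.g k) with hCm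
  -- the generators in terms of the monomials
  have hC : ∀ k, res.g k = ∑ v : ι, C (Cm k v) * mon K (v : Fin n →₀ ℕ) := by
    intro k
    have hsupp : (res.g k).support ⊆ hfin.toFinset := by
      intro m hm
      have hcm : coeff m (res.g k) ≠ 0 := mem_support_iff.mp hm
      obtain ⟨s, hs, hsle⟩ := supp_div (hgI k) hcm
      have hmd : mdeg m = d := homog_mdeg (hghom k) hcm
      have : s = m := le_mdeg_eq hsle (by rw [hmd, hmdeg s hs])
      exact hfin.mem_toFinset.mpr (this ▸ hs)
    calc res.g k = ∑ m ∈ (res.g k).support, monomial m (coeff m (res.g k)) :=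
          (support_sum_monomial_coeff _).symm
      _ = ∑ m ∈ hfin.toFinset, monomial m (coeff m (res.g k)) := by
          refine Finset.sum_subset hsupp fun m _ hm => ?_
          rw [notMem_support_iff.mp hm, map_zero]
      _ = ∑ v : ι, monomial (v : Fin n →₀ ℕ) (coeff (v : Fin n →₀ ℕ) (res.g k)) :=
          (Finset.sum_coe_sort hfin.toFinset _).symm
      _ = ∑ v : ι, C (Cm k v) * mon K (v : Fin n →₀ ℕ) := by
          refine Finset.sum_congr rfl fun v _ => ?_
          rw [mon, C_mul_monomial, mul_one]
  -- the monomials in terms of the generators, with constant coefficients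
  have hD : ∀ v : ι, ∃ Dv : Fin N → K,
      mon K (v : Fin n →₀ ℕ) = ∑ k, C (Dv k) * res.g k := by
    intro v
    have hv' : mon K (v : Fin n →₀ ℕ) ∈ LinearMap.range (Fintype.linearCombination R res.g) := by
      rw [res.aug_range]; exact hmemI _ (hmemS v)
    obtain ⟨p, hp⟩ := hv'
    rw [Fintype.linearCombination_apply] at hp
    refine ⟨fun k => coeff 0 (p k), ?_⟩
    refine (const_rep hghom ?_ hp).symm
    rw [mon]
    exact isHomogeneous_monomial _ (by rw [← mdeg_eq_degree]; exact hmdeg _ (hmemS v))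
  choose D hDspec using hD
  -- D * C = identity
  have hDC : ∀ v w : ι, (∑ k, D v k * Cm k w) = if v = w then 1 else 0 := by
    intro v w
    have h1 : mon K (v : Fin n →₀ ℕ)
        = ∑ w' : ι, C (∑ k, D v k * Cm k w') * mon K (w' : Fin n →₀ ℕ) := by
      calc mon K (v : Fin n →₀ ℕ) = ∑ k, C (D v k) * res.g k := hDspec v
        _ = ∑ k, ∑ w' : ι, C (D v k) * (C (Cm k w') * mon K (w' : Fin n →₀ ℕ)) := by
            refine Finset.sum_congr rfl fun k _ => ?_
            rw [hC k, Finset.mul_sum]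
        _ = ∑ w' : ι, C (∑ k, D v k * Cm k w') * mon K (w' : Fin n →₀ ℕ) := by
            rw [Finset.sum_comm]
            refine Finset.sum_congr rfl fun w' _ => ?_
            rw [map_sum, Finset.sum_mul]
            refine Finset.sum_congr rfl fun k _ => ?_
            rw [map_mul, mul_assoc]
    have h2 := congrArg (coeff (w : Fin n →₀ ℕ)) h1
    rw [mon, coeff_monomial, coeff_sum] at h2
    have h3 : ∀ w' : ι, coeff (w : Fin n →₀ ℕ)
        (C (∑ k, D v k * Cm k w') * mon K (w' : Fin n →₀ ℕ))
        = if w' = w then (∑ k, D v k * Cm k w') else 0 := by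
      intro w'
      rw [coeff_C_mul, mon, coeff_monomial]
      by_cases h : (w' : Fin n →₀ ℕ) = (w : Fin n →₀ ℕ)
      · rw [if_pos h, if_pos (Subtype.ext h), mul_one]
      · rw [if_neg h, if_neg (fun hc => h (congrArg _ hc)), mul_zero]
    rw [Finset.sum_congr rfl (fun w' _ => h3 w'), Finset.sum_ite_eq'] at h2
    rw [if_pos (Finset.mem_univ w)] at h2
    by_cases hvw : v = w
    · rw [if_pos hvw, ← h2, if_pos (congrArg _ hvw)]
    · rw [if_neg hvw, ← h2, if_neg (fun hc => hvw (Subtype.ext hc))]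
  -- the syzygy matrix with respect to the monomial generators
  set B : ι → Fin (res.b 1) → R := fun v l => ∑ k, C (Cm k v) * res.A 0 k l with hB
  have hBhom : ∀ v l, (B v l).IsHomogeneous 1 := by
    intro v l
    refine IsHomogeneous.sum _ _ _ fun k _ => ?_
    have hA : (res.A 0 k l).IsHomogeneous 1 := by
      rcases res.A_hom 0 k l with h | ⟨h, _⟩
      · rw [h]; exact isHomogeneous_zero _ _ _
      · rw [hdg, hdg] at h
        have : 0 + 1 + d - (0 + d) = 1 := by omega
        rwa [this] at h
    exact hA.C_mul _
  have hBsyz : ∀ l, ∑ v : ι, B v l * mon K (v : Fin n →₀ ℕ) = 0 := by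
    intro l
    have hcol : Fintype.linearCombination R res.g (fun k => res.A 0 k l * 1) = 0 := by
      have hmem : (fun k => res.A 0 k l * 1) ∈ LinearMap.range ((res.A 0).mulVecLin) := by
        refine ⟨Pi.single l 1, ?_⟩
        rw [Matrix.mulVecLin_apply, Matrix.mulVec_single]
        funext k; simp
      rw [← res.aug_exact] at hmem
      exact hmem
    rw [Fintype.linearCombination_apply] at hcol
    calc ∑ v : ι, B v l * mon K (v : Fin n →₀ ℕ)
        = ∑ v : ι, ∑ k, res.A 0 k l * (C (Cm k v) * mon K (v : Fin n →₀ ℕ)) := by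
          refine Finset.sum_congr rfl fun v _ => ?_
          rw [hB, Finset.sum_mul]
          exact Finset.sum_congr rfl fun k _ => by ring
      _ = ∑ k, res.A 0 k l * res.g k := by
          rw [Finset.sum_comm]
          refine Finset.sum_congr rfl fun k _ => ?_
          rw [← Finset.mul_sum, ← hC k]
      _ = 0 := by
          rw [← hcol]
          exact Finset.sum_congr rfl fun k _ => by rw [smul_eq_mul, mul_one]
  -- the kernel lemma
  have hker : ∀ y : ι → R, ∑ v : ι, y v * mon K (v : Fin n →₀ ℕ) = 0 →
      ∃ h : Fin (res.b 1) → R, ∀ v, y v = ∑ l, B v l * h l := by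
    intro y hy
    set x : Fin N → R := fun k => ∑ v : ι, y v * C (D v k) with hx
    have hxker : Fintype.linearCombination R res.g x = 0 := by
      rw [Fintype.linearCombination_apply]
      calc ∑ k, x k • res.g k
          = ∑ k, ∑ v : ι, y v * (C (D v k) * res.g k) := by
            refine Finset.sum_congr rfl fun k _ => ?_
            rw [smul_eq_mul, hx, Finset.sum_mul]
            exact Finset.sum_congr rfl fun v _ => by ring
        _ = ∑ v : ι, y v * mon K (v : Fin n →₀ ℕ) := by
            rw [Finset.sum_comm]
            refine Finset.sum_congr rfl fun v _ => ?_
            rw [← Finset.mul_sum, ← hDspec v]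
        _ = 0 := hy
    have hxmem : x ∈ LinearMap.range ((res.A 0).mulVecLin) := by
      rw [← res.aug_exact]; exact LinearMap.mem_ker.mpr hxker
    obtain ⟨h, hh⟩ := hxmem
    rw [Matrix.mulVecLin_apply] at hh
    have hxk : ∀ k, x k = ∑ l, res.A 0 k l * h l := by
      intro k; rw [← hh]; rfl
    refine ⟨h, fun v => ?_⟩
    calc y v = ∑ w : ι, y w * C (if w = v then 1 else 0) := by
          rw [Finset.sum_congr rfl (fun w (_ : w ∈ Finset.univ) => by
            rw [apply_ite (C : K → R), map_one, map_zero, mul_ite, mul_one, mul_zero])]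
          rw [Finset.sum_ite_eq', if_pos (Finset.mem_univ v)]
      _ = ∑ w : ι, ∑ k, y w * C (D w k) * C (Cm k v) := by
          refine Finset.sum_congr rfl fun w _ => ?_
          rw [← hDC w v, map_sum, Finset.mul_sum]
          exact Finset.sum_congr rfl fun k _ => by rw [map_mul, mul_assoc]
      _ = ∑ k, C (Cm k v) * x k := by
          rw [Finset.sum_comm]
          refine Finset.sum_congr rfl fun k _ => ?_
          rw [hx, Finset.mul_sum]
          exact Finset.sum_congr rfl fun w _ => by ring
      _ = ∑ l, B v l * h l := by
          rw [Finset.sum_congr rfl fun k (_ : k ∈ Finset.univ) => by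
            rw [hxk k, Finset.mul_sum]]
          rw [Finset.sum_comm]
          refine Finset.sum_congr rfl fun l _ => ?_
          rw [hB, Finset.sum_mul]
          exact Finset.sum_congr rfl fun k _ => by ring
  -- conclusion
  refine ⟨{i | (X i : R) * mon K u ∈ I'}, le_antisymm ?_ ?_⟩
  · -- colon ⊆ span of variables
    intro f hf
    have hfu : f * mon K u ∈ I' := by
      have := Submodule.mem_colon.mp hf (mon K u) (Submodule.mem_span_singleton_self _)
      rwa [smul_eq_mul] at this
    have hfu' : f * mon K u ∈ Submodule.span R (mon K '' (S \ {u})) := hfu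
    obtain ⟨nn, c, t, hrep⟩ := Submodule.mem_span_set'.mp hfu'
    have hw : ∀ i : Fin nn, ∃ w, w ∈ S \ {u} ∧ mon K w = (t i : R) := by
      intro i; obtain ⟨w, hw1, hw2⟩ := (t i).2; exact ⟨w, hw1, hw2⟩
    choose w hwmem hwmon using hw
    set wf : Fin nn → ι := fun i => ⟨w i, hfin.mem_toFinset.mpr (hwmem i).1⟩ with hwf
    set y : ι → R := fun v =>
      (if v = uS then f else 0) - ∑ i : Fin nn, if wf i = v then c i else 0 with hy
    have hy0 : ∑ v : ι, y v * mon K (v : Fin n →₀ ℕ) = 0 := by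
      have e1 : ∑ v : ι, (if v = uS then f else 0) * mon K (v : Fin n →₀ ℕ) = f * mon K u := by
        simp only [ite_mul, zero_mul]
        rw [Finset.sum_ite_eq', if_pos (Finset.mem_univ uS)]
      have e2 : ∑ v : ι, (∑ i : Fin nn, if wf i = v then c i else 0) * mon K (v : Fin n →₀ ℕ)
          = f * mon K u := by
        calc ∑ v : ι, (∑ i : Fin nn, if wf i = v then c i else 0) * mon K (v : Fin n →₀ ℕ)
            = ∑ i : Fin nn, ∑ v : ι, (if wf i = v then c i else 0) * mon K (v : Fin n →₀ ℕ) := by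
              rw [← Finset.sum_comm]
              exact Finset.sum_congr rfl fun v _ => Finset.sum_mul _ _ _
          _ = ∑ i : Fin nn, c i * mon K (w i) := by
              refine Finset.sum_congr rfl fun i _ => ?_
              simp only [ite_mul, zero_mul]
              rw [Finset.sum_ite_eq, if_pos (Finset.mem_univ (wf i))]
          _ = f * mon K u := by
              rw [← hrep]
              exact Finset.sum_congr rfl fun i _ => by rw [hwmon i, smul_eq_mul]
      calc ∑ v : ι, y v * mon K (v : Fin n →₀ ℕ)
          = ∑ v : ι, ((if v = uS then f else 0) * mon K (v : Fin n →₀ ℕ)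
              - (∑ i : Fin nn, if wf i = v then c i else 0) * mon K (v : Fin n →₀ ℕ)) := by
            exact Finset.sum_congr rfl fun v _ => by rw [hy, sub_mul]
        _ = 0 := by rw [Finset.sum_sub_distrib, e1, e2, sub_self]
    obtain ⟨h, hh⟩ := hker y hy0
    have hyuS : y uS = f := by
      have hne : ∀ i : Fin nn, wf i ≠ uS := by
        intro i hc
        exact (hwmem i).2 (congrArg Subtype.val hc)
      simp only [hy, if_true]
      rw [ Finset.sum_eq_zero (fun i _ => if_neg (hne i)), sub_zero]
    have hfeq : f = ∑ l, B uS l * h l := by rw [← hyuS, hh uS]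
    rw [hfeq]
    refine Submodule.sum_mem _ fun l _ => ?_
    have hBlu : B uS l * mon K u ∈ I' := by
      have hsplit : B uS l * mon K u + ∑ v ∈ Finset.univ.erase uS, B v l * mon K (v : Fin n →₀ ℕ)
          = ∑ v : ι, B v l * mon K (v : Fin n →₀ ℕ) :=
        Finset.add_sum_erase _ _ (Finset.mem_univ uS)
      have : B uS l * mon K u = -∑ v ∈ Finset.univ.erase uS, B v l * mon K (v : Fin n →₀ ℕ) := by
        rw [hBsyz l] at hsplit
        exact eq_neg_of_add_eq_zero_left hsplit
      rw [this]
      refine neg_mem (Submodule.sum_mem _ fun v hv => ?_)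
      have hvne : (v : Fin n →₀ ℕ) ≠ u := fun hc =>
        (Finset.mem_erase.mp hv).1 (Subtype.ext hc)
      exact Ideal.mul_mem_left _ _ (Ideal.subset_span ⟨(v : Fin n →₀ ℕ), ⟨hmemS v, hvne⟩, rfl⟩)
    have hBspan : B uS l ∈ Ideal.span ((fun i => (X i : R)) '' {i | (X i : R) * mon K u ∈ I'}) := by
      rw [← support_sum_monomial_coeff (B uS l)]
      refine Submodule.sum_mem _ fun m hm => ?_
      have hcm : coeff m (B uS l) ≠ 0 := mem_support_iff.mp hm
      obtain ⟨i, rfl⟩ := mdeg_one_single (homog_mdeg (hBhom uS l) hcm)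
      have hcoeff : coeff (Finsupp.single i 1 + u) (B uS l * mon K u) ≠ 0 := by
        rw [mon, coeff_mul_monomial, mul_one]
        exact hcm
      obtain ⟨s, hs, hsle⟩ := supp_div hBlu hcoeff
      have hmemI' : mon K (Finsupp.single i 1 + u) ∈ I' := mon_div_mem hs hsle
      have hiA : (X i : R) * mon K u ∈ I' := by
        have : (X i : R) * mon K u = mon K (Finsupp.single i 1 + u) := by
          rw [mon, mon, X, monomial_mul, one_mul]
        rw [this]; exact hmemI'
      have hXmem : (X i : R) ∈ Ideal.span ((fun i => (X i : R)) '' {i | (X i : R) * mon K u ∈ I'}) :=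
        Ideal.subset_span ⟨i, hiA, rfl⟩
      have : monomial (Finsupp.single i 1) (coeff (Finsupp.single i 1) (B uS l))
          = C (coeff (Finsupp.single i 1) (B uS l)) * X i := by
        rw [X, C_mul_monomial, mul_one]
      rw [this]
      exact Ideal.mul_mem_left _ _ hXmem
    exact Ideal.mul_mem_right _ _ hBspan
  · -- span of variables ⊆ colon
    rw [Ideal.span_le]
    rintro x ⟨i, hi, rfl⟩
    refine Submodule.mem_colon.mpr fun p hp => ?_
    obtain ⟨a, rfl⟩ := Submodule.mem_span_singleton.mp hp
    have : (X i : R) • (a • mon K u) = a * ((X i : R) * mon K u) := by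
      rw [smul_eq_mul, smul_eq_mul]; ring
    rw [this]
    exact Ideal.mul_mem_left _ _ hi
end

section
/- A monomial ideal I generated in a single degree has linear quotients if and only if there is an ordering u₁,...,u_k of G(I) such that the ideal (u₁,...,u_i) has a linear resolution for each i = 1,...,k. -/
open MvPolynomial

namespace StmtAux


variable {K : Type} [Field K] {τ : Type}

lemma mdeg_def (u : τ →₀ ℕ) : mdeg u = u.degree := rfl

lemma mdeg_add (a b : τ →₀ ℕ) : mdeg (a + b) = mdeg a + mdeg b :=
  Finsupp.sum_add_index' (fun _ => rfl) (fun _ _ _ => rfl)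

lemma mdeg_mono {a b : τ →₀ ℕ} (h : a ≤ b) : mdeg a ≤ mdeg b := by
  have h2 : a + (b - a) = b := add_tsub_cancel_of_le h
  have := mdeg_add a (b - a)
  rw [h2] at this; omega

lemma eq_of_le_mdeg {a b : τ →₀ ℕ} (h : a ≤ b) (hd : mdeg a = mdeg b) : a = b := by
  have h2 : a + (b - a) = b := add_tsub_cancel_of_le h
  have h3 := mdeg_add a (b - a)
  rw [h2] at h3
  have : mdeg (b - a) = 0 := by omega
  rw [mdeg_def, Finsupp.degree_eq_zero_iff] at this
  rw [← h2, this, add_zero]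

lemma mon_isHomog (u : τ →₀ ℕ) : (mon K u).IsHomogeneous (mdeg u) :=
  isHomogeneous_monomial _ (mdeg_def u).symm

lemma mon_ne_zero (u : τ →₀ ℕ) : (mon K u) ≠ 0 := by
  simp [mon, monomial_eq_zero]

lemma mon_mul (a b : τ →₀ ℕ) : mon K a * mon K b = mon K (a + b) := by
  simp [mon, monomial_mul]

lemma hc_of_isHomog {p : MvPolynomial τ K} {m : ℕ} (h : p.IsHomogeneous m) :
    homogeneousComponent m p = p := by
  rw [homogeneousComponent_of_mem ((mem_homogeneousSubmodule _ _).2 h), if_pos rfl]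

lemma hc_mul {g : MvPolynomial τ K} {e : ℕ} (hg : g.IsHomogeneous e) (m : ℕ)
    (p : MvPolynomial τ K) :
    homogeneousComponent m (p * g) =
      if e ≤ m then homogeneousComponent (m - e) p * g else 0 := by
  induction p using MvPolynomial.induction_on' with
  | monomial ν r =>
    have hmon : (monomial ν r : MvPolynomial τ K).IsHomogeneous ν.degree :=
      isHomogeneous_monomial _ rfl
    have hprod : ((monomial ν r : MvPolynomial τ K) * g).IsHomogeneous (ν.degree + e) :=
      hmon.mul hg
    rw [homogeneousComponent_of_mem ((mem_homogeneousSubmodule _ _).2 hprod),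
      homogeneousComponent_of_mem ((mem_homogeneousSubmodule _ _).2 hmon)]
    by_cases h1 : e ≤ m
    · by_cases h2 : m = ν.degree + e
      · rw [if_pos h2, if_pos h1, if_pos (show m - e = ν.degree by omega)]
      · rw [if_neg h2, if_pos h1, if_neg (show ¬ m - e = ν.degree by omega), zero_mul]
    · rw [if_neg h1, if_neg (show ¬ m = ν.degree + e by omega)]
  | add p q hp hq =>
    rw [add_mul, map_add, hp, hq, map_add, add_mul]
    split_ifs
    · rfl
    · rw [add_zero]

lemma hc_mul_of_le {g : MvPolynomial τ K} {e m : ℕ} (hg : g.IsHomogeneous e) (h : e ≤ m)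
    (p : MvPolynomial τ K) :
    homogeneousComponent m (p * g) = homogeneousComponent (m - e) p * g := by
  rw [hc_mul hg, if_pos h]

lemma exists_single_of_mdeg_one {μ : τ →₀ ℕ} (h : mdeg μ = 1) :
    ∃ x, μ = Finsupp.single x 1 := by
  classical
  rw [mdeg_def, Finsupp.degree_apply] at h
  have hne : μ.support.Nonempty := by
    by_contra hc
    rw [Finset.not_nonempty_iff_eq_empty] at hc
    rw [hc] at h; simp at h
  obtain ⟨x, hx⟩ := hne
  refine ⟨x, ?_⟩
  have hx1 : 1 ≤ μ x := by
    have := Finsupp.mem_support_iff.1 hx; omega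
  have hle : μ x ≤ 1 := by
    calc μ x ≤ ∑ i ∈ μ.support, μ i := Finset.single_le_sum (fun _ _ => Nat.zero_le _) hx
    _ = 1 := h
  ext y
  by_cases hxy : y = x
  · subst hxy; simp; omega
  · rw [Finsupp.single_apply, if_neg (by exact fun hh => hxy hh.symm)]
    by_contra hy0
    have hy : y ∈ μ.support := Finsupp.mem_support_iff.2 (by omega)
    have : μ x + μ y ≤ ∑ i ∈ μ.support, μ i := by
      rw [← Finset.sum_pair (by exact fun hh => hxy hh.symm : x ≠ y)]
      exact Finset.sum_le_sum_of_subset (by intro z hz; simp at hz; rcases hz with h|h <;> simp [h, hx, hy])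
    omega


end StmtAux

section KeyB
open MvPolynomial StmtAux

lemma keyB {K : Type} [Field K] {n k : ℕ} (w : Fin k → (Fin n →₀ ℕ))
    (hw : Function.Injective w) (hmin : IsMinGenSet (Set.range w)) (d : ℕ)
    (hdeg : ∀ j, mdeg (w j) = d) (i : Fin k) (e : ℕ)
    (hres : HasLinRes (Ideal.span ((fun j => mon K (w j)) '' {j | j ≤ i})) e) :
    genByVars (Submodule.colon (Ideal.span ((fun j => mon K (w j)) '' {j | j < i}))
      (Ideal.span {mon K (w i)})) := by
  classical
  set Ile := Ideal.span ((fun j => mon K (w j)) '' {j | j ≤ i}) with hIle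
  set Ilt := Ideal.span ((fun j => mon K (w j)) '' {j | j < i}) with hIlt
  set Col := Submodule.colon Ilt (Ideal.span {mon K (w i)}) with hCol
  obtain ⟨res, hdg⟩ := hres
  set aug := Fintype.linearCombination (MvPolynomial (Fin n) K)
    res.g with haug
  have hmonfun : (mon K : (Fin n →₀ ℕ) → MvPolynomial (Fin n) K)
      = fun s => monomial s 1 := rfl
  have himg : ∀ (A : Set (Fin k)), ((fun j => mon K (w j)) '' A) = (mon K) '' (w '' A) :=
    fun A => (Set.image_image _ _ _).symm
  have memLe : ∀ p : MvPolynomial (Fin n) K,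
      p ∈ Ile ↔ ∀ μ ∈ p.support, ∃ t, t ≤ i ∧ w t ≤ μ := by
    intro p
    rw [hIle, himg, hmonfun, mem_ideal_span_monomial_image]
    constructor
    · intro h μ hμ
      obtain ⟨s, hs, hle⟩ := h μ hμ
      obtain ⟨t, ht, rfl⟩ := hs
      exact ⟨t, ht, hle⟩
    · intro h μ hμ
      obtain ⟨t, ht, hle⟩ := h μ hμ
      exact ⟨w t, ⟨t, ht, rfl⟩, hle⟩
  have memLt : ∀ p : MvPolynomial (Fin n) K,
      p ∈ Ilt ↔ ∀ μ ∈ p.support, ∃ t, t < i ∧ w t ≤ μ := by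
    intro p
    rw [hIlt, himg, hmonfun, mem_ideal_span_monomial_image]
    constructor
    · intro h μ hμ
      obtain ⟨s, hs, hle⟩ := h μ hμ
      obtain ⟨t, ht, rfl⟩ := hs
      exact ⟨t, ht, hle⟩
    · intro h μ hμ
      obtain ⟨t, ht, hle⟩ := h μ hμ
      exact ⟨w t, ⟨t, ht, rfl⟩, hle⟩
  have memColon : ∀ c : MvPolynomial (Fin n) K, c ∈ Col ↔ c * mon K (w i) ∈ Ilt :=
    fun c => Ideal.mem_colon_span_singleton
  have charColon : ∀ c : MvPolynomial (Fin n) K,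
      c ∈ Col ↔ ∀ μ ∈ c.support, ∃ t, t < i ∧ w t ≤ μ + w i := by
    intro c
    rw [memColon, memLt (c * mon K (w i))]
    constructor
    · intro h μ hμ
      apply h (μ + w i)
      rw [mem_support_iff, show c * mon K (w i) = c * monomial (w i) 1 from rfl,
        coeff_mul_monomial]
      simpa using mem_support_iff.1 hμ
    · intro h ν hν
      rw [mem_support_iff, show c * mon K (w i) = c * monomial (w i) 1 from rfl,
        coeff_mul_monomial'] at hν
      by_cases hle : w i ≤ ν
      · rw [if_pos hle, mul_one] at hν
        obtain ⟨t, hti, htle⟩ := h (ν - w i) (mem_support_iff.2 hν)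
        exact ⟨t, hti, by rwa [tsub_add_cancel_of_le hle] at htle⟩
      · rw [if_neg hle] at hν
        exact absurd rfl hν
  have gmem : ∀ j, res.g j ∈ Ile := by
    intro j
    have hh : res.g j ∈ LinearMap.range aug := ⟨Pi.single j 1, by simp [haug]⟩
    rwa [haug, res.aug_range] at hh
  have ghom : ∀ j, (res.g j).IsHomogeneous e := by
    intro j
    have h := res.g_hom j
    rwa [hdg 0 j, Nat.zero_add] at h
  have monIle : mon K (w i) ∈ Ile :=
    Ideal.subset_span ⟨i, le_refl i, rfl⟩
  have hed : e = d := by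
    have hle : e ≤ d := by
      by_contra hlt
      push_neg at hlt
      obtain ⟨v, hv⟩ : mon K (w i) ∈ LinearMap.range aug := by
        rw [haug, res.aug_range]; exact monIle
      have h2 : homogeneousComponent d (mon K (w i)) = mon K (w i) :=
        hc_of_isHomog (by rw [← hdeg i]; exact mon_isHomog _)
      have h3 : homogeneousComponent d (aug v) = 0 := by
        rw [haug, Fintype.linearCombination_apply, map_sum]
        refine Finset.sum_eq_zero fun j _ => ?_
        rw [smul_eq_mul, hc_mul (ghom j), if_neg (by omega)]
      rw [hv, h2] at h3
      exact mon_ne_zero _ h3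
    have hge : d ≤ e := by
      have hex : ∃ j, res.g j ≠ 0 := by
        by_contra hall
        push_neg at hall
        obtain ⟨v, hv⟩ : mon K (w i) ∈ LinearMap.range aug := by
          rw [haug, res.aug_range]; exact monIle
        rw [haug, Fintype.linearCombination_apply] at hv
        refine mon_ne_zero (K := K) (w i) ?_
        rw [← hv]
        exact (Finset.sum_eq_zero fun j _ => by rw [hall j, smul_zero])
      obtain ⟨j0, hj0⟩ := hex
      obtain ⟨μ, hμ⟩ := (MvPolynomial.support_nonempty.2 hj0)
      obtain ⟨t, hti, htle⟩ := (memLe _).1 (gmem j0) μ hμ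
      have hdμ : μ.degree = e := by
        by_contra hne
        exact (mem_support_iff.1 hμ) ((ghom j0).coeff_eq_zero hne)
      calc d = mdeg (w t) := (hdeg t).symm
        _ ≤ mdeg μ := mdeg_mono htle
        _ = e := by rw [mdeg_def, hdμ]
    omega
  subst hed
  set Tle : Finset (Fin k) := Finset.univ.filter (· ≤ i) with hTle
  have memTle : ∀ t, t ∈ Tle ↔ t ≤ i := by
    intro t; rw [hTle, Finset.mem_filter]; simp
  have hCc' : ∀ t : Fin k, ∃ c : Fin (res.b 0) → K,
      t ≤ i → mon K (w t) = ∑ j, C (c j) * res.g j := by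
    intro t
    by_cases ht : t ≤ i
    · obtain ⟨v, hv⟩ : mon K (w t) ∈ LinearMap.range aug := by
        rw [haug, res.aug_range]
        exact Ideal.subset_span ⟨t, ht, rfl⟩
      refine ⟨fun j => coeff 0 (v j), fun _ => ?_⟩
      have h1 : homogeneousComponent e (aug v) = ∑ j, C (coeff 0 (v j)) * res.g j := by
        rw [haug, Fintype.linearCombination_apply, map_sum]
        refine Finset.sum_congr rfl fun j _ => ?_
        rw [smul_eq_mul, hc_mul_of_le (ghom j) (le_refl e), Nat.sub_self,
          homogeneousComponent_zero]
      rw [hv] at h1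
      rw [← h1, hc_of_isHomog (by rw [← hdeg t]; exact mon_isHomog _)]
    · exact ⟨0, fun h => absurd h ht⟩
  choose Cc hCc using hCc'
  set Dm : Fin (res.b 0) → Fin k → K := fun j t => coeff (w t) (res.g j) with hDmdef
  have hgdeg : ∀ j, ∀ ν ∈ (res.g j).support, Finsupp.degree ν = e := by
    intro j ν hν
    by_contra hne
    exact (mem_support_iff.1 hν) ((ghom j).coeff_eq_zero hne)
  have hDm : ∀ j, res.g j = ∑ t ∈ Tle, C (Dm j t) * mon K (w t) := by
    intro j
    apply MvPolynomial.ext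
    intro ν
    rw [coeff_sum]
    have hterm : ∀ t, coeff ν (C (Dm j t) * mon K (w t)) =
        if w t = ν then Dm j t else 0 := by
      intro t
      rw [show C (Dm j t) * mon K (w t) = monomial (w t) (Dm j t) by
        rw [mon, C_mul_monomial, mul_one], coeff_monomial]
    by_cases hν : ∃ t0, t0 ≤ i ∧ w t0 = ν
    · obtain ⟨t0, ht0, rfl⟩ := hν
      rw [Finset.sum_eq_single t0]
      · rw [hterm, if_pos rfl]
      · intro t ht htne
        rw [hterm, if_neg (fun hh => htne (hw hh))]
      · intro hnot
        exact absurd ((memTle t0).2 ht0) hnot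
    · push_neg at hν
      rw [Finset.sum_eq_zero (fun t ht => by
        rw [hterm, if_neg (hν t ((memTle t).1 ht))])]
      rcases eq_or_ne (coeff ν (res.g j)) 0 with hz | hz
      · simp [hz]
      · have hsupp : ν ∈ (res.g j).support := mem_support_iff.2 hz
        obtain ⟨t, hti, hle⟩ := (memLe _).1 (gmem j) ν hsupp
        have : w t = ν := eq_of_le_mdeg hle (by
          rw [hdeg t, mdeg_def, hgdeg j ν hsupp])
        exact absurd this (hν t hti)
  have hCD : ∀ t, t ≤ i → ∀ t', t' ≤ i →
      (∑ j, Cc t j * Dm j t') = if t = t' then 1 else 0 := by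
    intro t ht t' ht'
    have h1 := congrArg (coeff (w t')) (hCc t ht)
    rw [show mon K (w t) = monomial (w t) (1 : K) from rfl, coeff_monomial, coeff_sum] at h1
    simp_rw [coeff_C_mul] at h1
    rw [show (∑ j, Cc t j * coeff (w t') (res.g j)) = ∑ j, Cc t j * Dm j t' from rfl] at h1
    rw [← h1]
    by_cases hh : t = t'
    · subst hh; rw [if_pos rfl, if_pos rfl]
    · rw [if_neg (fun he => hh (hw he)), if_neg hh]
  -- the candidate variable set
  set Avars : Set (Fin n) := {x | X x ∈ Col} with hAvars
  set V := Ideal.span ((fun x : Fin n => (X x : MvPolynomial (Fin n) K)) '' Avars) with hV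
  have hβV : ∀ β : MvPolynomial (Fin n) K, β.IsHomogeneous 1 → β ∈ Col → β ∈ V := by
    intro β hhom hcol
    rw [← support_sum_monomial_coeff β]
    apply Ideal.sum_mem
    intro μ' hμ'
    have hdeg1 : mdeg μ' = 1 := by
      rw [mdeg_def]
      by_contra hne
      exact (mem_support_iff.1 hμ') (hhom.coeff_eq_zero hne)
    obtain ⟨x, rfl⟩ := exists_single_of_mdeg_one hdeg1
    have hX : X x ∈ Col := by
      rw [charColon]
      intro ν hν
      rw [MvPolynomial.support_X, Finset.mem_singleton] at hν
      subst hν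
      exact (charColon β).1 hcol _ hμ'
    have hxA : x ∈ Avars := hX
    rw [show monomial (Finsupp.single x 1) (coeff (Finsupp.single x 1) β) =
        C (coeff (Finsupp.single x 1) β) * X x by
      rw [X, C_mul_monomial, mul_one]]
    exact Ideal.mul_mem_left _ _ (Ideal.subset_span ⟨x, hxA, rfl⟩)
  have hmono : ∀ μ : Fin n →₀ ℕ, (∃ t, t < i ∧ w t ≤ μ + w i) → mon K μ ∈ V := by
    rintro μ ⟨t, hti, hwt⟩
    have htine : t ≠ i := ne_of_lt hti
    set s : Fin k → MvPolynomial (Fin n) K := fun t' =>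
      if t' = i then mon K μ else if t' = t then -(mon K (μ + w i - w t)) else 0 with hs
    have hsub : {t, i} ⊆ Tle := by
      intro x hx
      rw [Finset.mem_insert, Finset.mem_singleton] at hx
      rcases hx with h | h
      · exact (memTle x).2 (by rw [h]; exact le_of_lt hti)
      · exact (memTle x).2 (by rw [h])
    have hsi : s i = mon K μ := by simp [hs]
    have hst : s t = -(mon K (μ + w i - w t)) := by simp [hs, htine]
    have hszero : ∀ x, x ≠ i → x ≠ t → s x = 0 := by
      intro x h1 h2; simp [hs, h1, h2]
    have hsyz : ∑ t' ∈ Tle, s t' * mon K (w t') = 0 := by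
      rw [← Finset.sum_subset hsub (fun x _ hx => by
        rw [Finset.mem_insert, Finset.mem_singleton] at hx
        push_neg at hx
        rw [hszero x hx.2 hx.1, zero_mul])]
      rw [Finset.sum_pair htine, hst, hsi]
      rw [neg_mul, mon_mul, mon_mul, tsub_add_cancel_of_le hwt, neg_add_cancel]
    set s' : Fin (res.b 0) → MvPolynomial (Fin n) K := fun j =>
      ∑ t' ∈ Tle, C (Cc t' j) * s t' with hs'
    have hker : aug s' = 0 := by
      rw [haug, Fintype.linearCombination_apply]
      simp_rw [smul_eq_mul, hs', Finset.sum_mul]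
      rw [Finset.sum_comm]
      have : ∀ t' ∈ Tle, ∑ j, C (Cc t' j) * s t' * res.g j =
          s t' * mon K (w t') := by
        intro t' ht'
        rw [hCc t' ((memTle t').1 ht'), Finset.mul_sum]
        exact Finset.sum_congr rfl fun j _ => by ring
      rw [Finset.sum_congr rfl this, hsyz]
    have hrange : s' ∈ LinearMap.range (res.A 0).mulVecLin := by
      rw [← res.aug_exact]
      exact LinearMap.mem_ker.2 hker
    obtain ⟨p, hp⟩ := hrange
    have hs'eq : ∀ j, s' j = ∑ l, res.A 0 j l * p l := by
      intro j
      rw [← hp]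
      rfl
    have hrec : mon K μ = ∑ l, (∑ j, C (Dm j i) * res.A 0 j l) * p l := by
      have h1 : mon K μ = ∑ j, C (Dm j i) * s' j := by
        simp_rw [hs', Finset.mul_sum]
        rw [Finset.sum_comm]
        have : ∀ t' ∈ Tle, ∑ j, C (Dm j i) * (C (Cc t' j) * s t') =
            C (∑ j, Cc t' j * Dm j i) * s t' := by
          intro t' ht'
          rw [map_sum, Finset.sum_mul]
          exact Finset.sum_congr rfl fun j _ => by
            rw [C_mul]; ring
        rw [Finset.sum_congr rfl this]
        have h2 : ∀ t' ∈ Tle, C (∑ j, Cc t' j * Dm j i) * s t' =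
            (if t' = i then (1:MvPolynomial (Fin n) K) else 0) * s t' := by
          intro t' ht'
          rw [hCD t' ((memTle t').1 ht') i (le_refl i)]
          split_ifs <;> simp
        rw [Finset.sum_congr rfl h2]
        simp_rw [ite_mul, one_mul, zero_mul]
        rw [Finset.sum_ite_eq' Tle i (fun t' => s t'), if_pos ((memTle i).2 (le_refl i)), hsi]
      rw [h1]
      simp_rw [hs'eq, Finset.mul_sum]
      rw [Finset.sum_comm]
      refine Finset.sum_congr rfl fun l _ => ?_
      rw [Finset.sum_mul]
      exact Finset.sum_congr rfl fun j _ => by ring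
    have hβhom : ∀ l, (∑ j, C (Dm j i) * res.A 0 j l).IsHomogeneous 1 := by
      intro l
      rw [← mem_homogeneousSubmodule]
      apply Submodule.sum_mem
      intro j _
      rw [mem_homogeneousSubmodule]
      rcases res.A_hom 0 j l with h0 | ⟨hh, _⟩
      · rw [h0, mul_zero]
        exact isHomogeneous_zero _ _ _
      · have hd1 : res.dg 1 l - res.dg 0 j = 1 := by
          rw [hdg 1 l, hdg 0 j]; omega
        rw [hd1] at hh
        simpa using (isHomogeneous_C (Fin n) (Dm j i)).mul hh
    have hβcolon : ∀ l, (∑ j, C (Dm j i) * res.A 0 j l) ∈ Col := by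
      intro l
      rw [memColon]
      have hcolk : aug ((res.A 0).mulVecLin (Pi.single l 1)) = 0 := by
        have hmem : (res.A 0).mulVecLin (Pi.single l 1) ∈ LinearMap.ker aug := by
          rw [haug, res.aug_exact]
          exact ⟨Pi.single l 1, rfl⟩
        exact LinearMap.mem_ker.1 hmem
      have hcol0 : ∑ j, res.A 0 j l * res.g j = 0 := by
        rw [haug, Fintype.linearCombination_apply] at hcolk
        rw [← hcolk]
        refine Finset.sum_congr rfl fun j _ => ?_
        simp [Matrix.mulVecLin_apply, Matrix.mulVec_single]
      have hbsyz : ∑ t' ∈ Tle, (∑ j, C (Dm j t') * res.A 0 j l) * mon K (w t') = 0 := by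
        have hswap : ∑ t' ∈ Tle, (∑ j, C (Dm j t') * res.A 0 j l) * mon K (w t')
            = ∑ j, res.A 0 j l * res.g j := by
          simp_rw [Finset.sum_mul]
          rw [Finset.sum_comm]
          refine Finset.sum_congr rfl fun j _ => ?_
          rw [hDm j, Finset.mul_sum]
          exact Finset.sum_congr rfl fun t' _ => by ring
        rw [hswap, hcol0]
      have hisplit := Finset.add_sum_erase Tle
        (fun t' => (∑ j, C (Dm j t') * res.A 0 j l) * mon K (w t'))
        ((memTle i).2 (le_refl i))
      rw [hbsyz] at hisplit
      have heq : (∑ j, C (Dm j i) * res.A 0 j l) * mon K (w i) =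
          -∑ t' ∈ Tle.erase i, (∑ j, C (Dm j t') * res.A 0 j l) * mon K (w t') :=
        eq_neg_of_add_eq_zero_left hisplit
      rw [heq]
      apply neg_mem
      apply Ideal.sum_mem
      intro t' ht'
      rw [Finset.mem_erase] at ht'
      have ht'lt : t' < i := lt_of_le_of_ne ((memTle t').1 ht'.2) ht'.1
      exact Ideal.mul_mem_left _ _ (Ideal.subset_span ⟨t', ht'lt, rfl⟩)
    rw [hrec]
    exact Ideal.sum_mem _ fun l _ =>
      Ideal.mul_mem_right _ _ (hβV _ (hβhom l) (hβcolon l))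
  refine ⟨Avars, le_antisymm ?_ ?_⟩
  · intro c hc
    have hcchar := (charColon c).1 hc
    rw [← support_sum_monomial_coeff c]
    apply Ideal.sum_mem
    intro μ hμ
    rw [show monomial μ (coeff μ c) = C (coeff μ c) * mon K μ by
      rw [mon, C_mul_monomial, mul_one]]
    exact Ideal.mul_mem_left _ _ (hmono μ (hcchar μ hμ))
  · rw [Ideal.span_le]
    rintro f ⟨x, hx, rfl⟩
    exact hx
end KeyB

section TESTA1
open MvPolynomial StmtAux

variable {K : Type} [Field K] {σ : Type}

/-- The zero resolution of the zero ideal. -/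
noncomputable def zeroRes : MinFreeRes (⊥ : Ideal (MvPolynomial σ K)) where
  b := fun _ => 0
  dg := fun _ x => x.elim0
  g := fun x => x.elim0
  A := fun _ => fun x _ => x.elim0
  g_hom := fun x => x.elim0
  A_hom := fun _ x _ => x.elim0
  aug_range := by
    apply le_antisymm
    · rintro x ⟨v, rfl⟩
      simp [Fintype.linearCombination_apply]
    · exact bot_le
  aug_exact := by
    apply le_antisymm
    · rintro v _
      exact ⟨0, Subsingleton.elim _ _⟩
    · rintro v _
      simp [Fintype.linearCombination_apply]
  is_exact := by
    intro i
    apply le_antisymm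
    · rintro v _
      exact ⟨0, Subsingleton.elim _ _⟩
    · rintro v _
      exact Subsingleton.elim _ _

lemma exists_homog_preimage_aug {a : ℕ} (g : Fin a → MvPolynomial σ K) (d : ℕ)
    (hg : ∀ t, (g t).IsHomogeneous d) (m : ℕ) (x : MvPolynomial σ K)
    (hx : x.IsHomogeneous (m + d))
    (hmem : x ∈ LinearMap.range (Fintype.linearCombination (MvPolynomial σ K) g)) :
    ∃ v : Fin a → MvPolynomial σ K,
      Fintype.linearCombination (MvPolynomial σ K) g v = x ∧
      ∀ t, (v t).IsHomogeneous m := by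
  obtain ⟨v, hv⟩ := hmem
  refine ⟨fun t => homogeneousComponent m (v t), ?_,
    fun t => homogeneousComponent_isHomogeneous m _⟩
  rw [Fintype.linearCombination_apply] at hv ⊢
  have h1 : ∑ t, homogeneousComponent m (v t) • g t
      = homogeneousComponent (m + d) (∑ t, v t • g t) := by
    rw [map_sum]
    refine Finset.sum_congr rfl fun t _ => ?_
    rw [smul_eq_mul, smul_eq_mul, hc_mul_of_le (hg t) (Nat.le_add_left d m),
      Nat.add_sub_cancel]
  rw [h1, hv, hc_of_isHomog hx]

lemma exists_homog_preimage_mat {a b : ℕ} (A : Matrix (Fin a) (Fin b) (MvPolynomial σ K))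
    (hA : ∀ p q, A p q = 0 ∨ (A p q).IsHomogeneous 1) (m : ℕ)
    (x : Fin a → MvPolynomial σ K) (hx : ∀ p, (x p).IsHomogeneous (m + 1))
    (hmem : x ∈ LinearMap.range A.mulVecLin) :
    ∃ v : Fin b → MvPolynomial σ K, A.mulVecLin v = x ∧ ∀ q, (v q).IsHomogeneous m := by
  obtain ⟨v, hv⟩ := hmem
  refine ⟨fun q => homogeneousComponent m (v q), ?_,
    fun q => homogeneousComponent_isHomogeneous m _⟩
  funext p
  have h1 : (A.mulVecLin fun q => homogeneousComponent m (v q)) p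
      = homogeneousComponent (m + 1) ((A.mulVecLin v) p) := by
    rw [Matrix.mulVecLin_apply, Matrix.mulVecLin_apply, Matrix.mulVec, Matrix.mulVec,
      dotProduct, dotProduct, map_sum]
    refine Finset.sum_congr rfl fun q _ => ?_
    rcases hA p q with h0 | hh
    · rw [h0, zero_mul, zero_mul, map_zero]
    · rw [mul_comm (A p q), mul_comm (A p q), hc_mul_of_le hh (Nat.le_add_left 1 m),
        Nat.add_sub_cancel]
  rw [h1, hv, hc_of_isHomog (hx p)]

lemma hasLinRes_of {I : Ideal (MvPolynomial σ K)} (d : ℕ)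
    (ι : ℕ → Type) [inst1 : ∀ i, Fintype (ι i)] [inst2 : ∀ i, DecidableEq (ι i)]
    (g : ι 0 → MvPolynomial σ K)
    (A : (i : ℕ) → Matrix (ι i) (ι (i+1)) (MvPolynomial σ K))
    (g_hom : ∀ x, (g x).IsHomogeneous d)
    (A_hom : ∀ i x y, A i x y = 0 ∨ (A i x y).IsHomogeneous 1)
    (aug_range : LinearMap.range (Fintype.linearCombination (MvPolynomial σ K) g) = I)
    (aug_exact : LinearMap.ker (Fintype.linearCombination (MvPolynomial σ K) g) = LinearMap.range ((A 0).mulVecLin))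
    (is_exact : ∀ i, LinearMap.ker ((A i).mulVecLin)
      = LinearMap.range ((A (i+1)).mulVecLin)) :
    HasLinRes I d := by
  classical
  set e : ∀ i, ι i ≃ Fin (Fintype.card (ι i)) := fun i => Fintype.equivFin (ι i) with he
  set A' : (i : ℕ) → Matrix (Fin (Fintype.card (ι i))) (Fin (Fintype.card (ι (i+1))))
      (MvPolynomial σ K) := fun i => fun p q => A i ((e i).symm p) ((e (i+1)).symm q) with hA'
  set g' : Fin (Fintype.card (ι 0)) → MvPolynomial σ K := fun p => g ((e 0).symm p) with hg'
  have hlc : ∀ v : Fin (Fintype.card (ι 0)) → MvPolynomial σ K,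
      Fintype.linearCombination (MvPolynomial σ K) g' v
      = Fintype.linearCombination (MvPolynomial σ K) g
        (fun x => v (e 0 x)) := by
    intro v
    rw [Fintype.linearCombination_apply, Fintype.linearCombination_apply]
    exact Fintype.sum_equiv (e 0).symm _ _ (fun p => by simp [hg'])
  have hmv : ∀ (i : ℕ) (v : Fin (Fintype.card (ι (i+1))) → MvPolynomial σ K) (x : ι i),
      ((A' i).mulVec v) (e i x) = ((A i).mulVec (fun y => v (e (i+1) y))) x := by
    intro i v x
    rw [Matrix.mulVec, Matrix.mulVec, dotProduct, dotProduct]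
    exact Fintype.sum_equiv (e (i+1)).symm _ _ (fun q => by simp [hA'])
  have hkerA : ∀ (i : ℕ) (v : Fin (Fintype.card (ι (i+1))) → MvPolynomial σ K),
      (A' i).mulVecLin v = 0 ↔ (A i).mulVecLin (fun y => v (e (i+1) y)) = 0 := by
    intro i v
    rw [Matrix.mulVecLin_apply, Matrix.mulVecLin_apply]
    constructor
    · intro h
      funext x
      rw [← hmv i v x, h]
      rfl
    · intro h
      funext p
      have hp : p = e i ((e i).symm p) := by simp
      rw [hp, hmv i v ((e i).symm p), h]
      rfl
  have hrangeA : ∀ (i : ℕ) (v : Fin (Fintype.card (ι i)) → MvPolynomial σ K),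
      v ∈ LinearMap.range ((A' i).mulVecLin) ↔
      (fun x => v (e i x)) ∈ LinearMap.range ((A i).mulVecLin) := by
    intro i v
    constructor
    · rintro ⟨u, rfl⟩
      exact ⟨fun y => u (e (i+1) y), by
        funext x
        rw [Matrix.mulVecLin_apply, ← hmv i u x]
        rfl⟩
    · rintro ⟨w, hw⟩
      refine ⟨fun q => w ((e (i+1)).symm q), ?_⟩
      funext p
      have hp : p = e i ((e i).symm p) := by simp
      rw [Matrix.mulVecLin_apply, hp, hmv]
      have : (fun y => w ((e (i+1)).symm (e (i+1) y))) = w := by funext y; simp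
      rw [this]
      have := congrFun hw ((e i).symm p)
      rw [Matrix.mulVecLin_apply] at this
      rw [this]
  refine ⟨⟨fun i => Fintype.card (ι i), fun i _ => i + d, g', A', ?_, ?_, ?_, ?_, ?_⟩,
    fun i k => rfl⟩
  · intro k
    simpa using g_hom ((e 0).symm k)
  · intro i k l
    rcases A_hom i ((e i).symm k) ((e (i+1)).symm l) with h0 | hh
    · exact Or.inl h0
    · refine Or.inr ⟨?_, show i + d < i + 1 + d by omega⟩
      show (A' i k l).IsHomogeneous (i + 1 + d - (i + d))
      have h1 : i + 1 + d - (i + d) = 1 := by omega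
      rw [h1]
      exact hh
  · rw [← aug_range]
    apply le_antisymm
    · rintro x ⟨v, rfl⟩
      exact ⟨fun y => v (e 0 y), (hlc v).symm⟩
    · rintro x ⟨v, rfl⟩
      refine ⟨fun p => v ((e 0).symm p), ?_⟩
      rw [hlc]
      congr 1
      funext y
      simp
  · apply le_antisymm
    · intro v hv
      rw [LinearMap.mem_ker, hlc] at hv
      have : (fun x => v (e 0 x)) ∈ LinearMap.range ((A 0).mulVecLin) := by
        rw [← aug_exact]
        exact hv
      exact (hrangeA 0 v).2 this
    · intro v hv
      rw [LinearMap.mem_ker, hlc]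
      have := (hrangeA 0 v).1 hv
      rw [← aug_exact] at this
      exact this
  · intro i
    apply le_antisymm
    · intro v hv
      rw [LinearMap.mem_ker] at hv
      rw [hkerA] at hv
      have : (fun y => v (e (i+1) y)) ∈ LinearMap.range ((A (i+1)).mulVecLin) := by
        rw [← is_exact i]
        exact hv
      exact (hrangeA (i+1) v).2 this
    · intro v hv
      rw [LinearMap.mem_ker, hkerA]
      have := (hrangeA (i+1) v).1 hv
      rw [← is_exact i] at this
      exact this

end TESTA1

section TESTA2
open MvPolynomial StmtAux

variable {K : Type} [Field K] {σ : Type} {J C : Ideal (MvPolynomial σ K)}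

lemma mulVecLin_col {a b c : ℕ} (A : Matrix (Fin a) (Fin b) (MvPolynomial σ K))
    (B : Matrix (Fin b) (Fin c) (MvPolynomial σ K)) (y : Fin c) :
    A.mulVecLin (fun q => B q y) = fun t => (A * B) t y := by
  funext t
  simp [Matrix.mulVecLin_apply, Matrix.mulVec, dotProduct, Matrix.mul_apply]

lemma prod_col_homog {a b c : ℕ} (M : Matrix (Fin a) (Fin b) (MvPolynomial σ K))
    (N : Matrix (Fin b) (Fin c) (MvPolynomial σ K))
    (hM : ∀ t q, (M t q).IsHomogeneous 1)
    (hN : ∀ q y, N q y = 0 ∨ (N q y).IsHomogeneous 1) :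
    ∀ t y, ((M * N) t y).IsHomogeneous 2 := by
  intro t y
  rw [Matrix.mul_apply, ← mem_homogeneousSubmodule]
  apply Submodule.sum_mem
  intro q _
  rw [mem_homogeneousSubmodule]
  rcases hN q y with h0 | hh
  · rw [h0, mul_zero]
    exact isHomogeneous_zero _ _ _
  · exact (hM t q).mul hh

lemma ghom_of_lin {d : ℕ} (P : MinFreeRes J) (hP : ∀ i k, P.dg i k = i + d) :
    ∀ t, (P.g t).IsHomogeneous d := by
  intro t
  have h := P.g_hom t
  rwa [hP 0 t, Nat.zero_add] at h

lemma Ahom_of_lin {d : ℕ} (P : MinFreeRes J) (hP : ∀ i k, P.dg i k = i + d) :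
    ∀ j t s, P.A j t s = 0 ∨ (P.A j t s).IsHomogeneous 1 := by
  intro j t s
  rcases P.A_hom j t s with h0 | ⟨hh, _⟩
  · exact Or.inl h0
  · refine Or.inr ?_
    have h1 : P.dg (j+1) s - P.dg j t = 1 := by
      rw [hP (j+1) s, hP j t]; omega
    rwa [h1] at hh

lemma matrix_comp_zero (P : MinFreeRes J) :
    ∀ j (v : Fin (P.b (j+2)) → MvPolynomial σ K),
      (P.A j).mulVec ((P.A (j+1)).mulVec v) = 0 := by
  intro j v
  have hmem : (P.A (j+1)).mulVecLin v ∈ LinearMap.ker ((P.A j).mulVecLin) := by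
    rw [P.is_exact j]
    exact ⟨v, rfl⟩
  simpa [Matrix.mulVecLin_apply] using hmem

lemma aug_comp_zero (P : MinFreeRes J) :
    ∀ (v : Fin (P.b 1) → MvPolynomial σ K),
      Fintype.linearCombination (MvPolynomial σ K) P.g
        ((P.A 0).mulVec v) = 0 := by
  intro v
  have hmem : (P.A 0).mulVecLin v ∈ LinearMap.ker (Fintype.linearCombination
      (MvPolynomial σ K) P.g) := by
    rw [P.aug_exact]
    exact ⟨v, rfl⟩
  simpa [Matrix.mulVecLin_apply] using hmem

lemma psi_exists (u0 : MvPolynomial σ K) (d : ℕ) (P : MinFreeRes J) (Q : MinFreeRes C)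
    (hu : u0.IsHomogeneous d) (hC : ∀ r, r * u0 ∈ J ↔ r ∈ C)
    (hP : ∀ i k, P.dg i k = i + d) (hQ : ∀ i k, Q.dg i k = i + 1) :
    ∃ ψ : (j : ℕ) → Matrix (Fin (P.b j)) (Fin (Q.b j)) (MvPolynomial σ K),
      (∀ j t m, (ψ j t m).IsHomogeneous 1) ∧
      (∀ m, Fintype.linearCombination (MvPolynomial σ K) P.g
        (fun t => ψ 0 t m) = Q.g m * u0) ∧
      (∀ j, P.A j * ψ (j+1) = ψ j * Q.A j) := by
  classical
  have hgP := ghom_of_lin P hP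
  have hgQ := ghom_of_lin Q hQ
  have hAP := Ahom_of_lin P hP
  have hAQ := Ahom_of_lin Q hQ
  have hQgmem : ∀ m, Q.g m ∈ C := by
    intro m
    have h : Q.g m ∈ LinearMap.range (Fintype.linearCombination (MvPolynomial σ K) Q.g) := ⟨Pi.single m 1, by simp⟩
    rwa [Q.aug_range] at h
  have hQAA : ∀ j, Q.A j * Q.A (j+1) = 0 := by
    intro j
    apply Matrix.ext
    intro q y
    have h1 := congrFun (matrix_comp_zero Q j (Pi.single y 1)) q
    rw [Matrix.mulVec_single] at h1
    simp only [Matrix.mulVec, dotProduct, mul_one, Pi.zero_apply] at h1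
    rw [Matrix.mul_apply, Matrix.zero_apply]
    simpa using h1
  set Inv : ∀ j, Matrix (Fin (P.b j)) (Fin (Q.b j)) (MvPolynomial σ K) → Prop :=
    fun j M => ∀ m', (fun t => (M * Q.A j) t m') ∈ LinearMap.range ((P.A j).mulVecLin)
    with hInv
  -- base
  have hbase : ∃ M0 : Matrix (Fin (P.b 0)) (Fin (Q.b 0)) (MvPolynomial σ K),
      (∀ t m, (M0 t m).IsHomogeneous 1) ∧
      (∀ m, Fintype.linearCombination (MvPolynomial σ K) P.g
        (fun t => M0 t m) = Q.g m * u0) ∧ Inv 0 M0 := by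
    have hcols : ∀ m : Fin (Q.b 0), ∃ v : Fin (P.b 0) → MvPolynomial σ K,
        Fintype.linearCombination (MvPolynomial σ K) P.g v
          = Q.g m * u0 ∧ ∀ t, (v t).IsHomogeneous 1 := by
      intro m
      apply exists_homog_preimage_aug P.g d hgP 1 _ ((hgQ m).mul hu)
      rw [P.aug_range]
      exact (hC (Q.g m)).2 (hQgmem m)
    choose vv hvv1 hvv2 using hcols
    refine ⟨Matrix.of (fun t m => vv m t), fun t m => hvv2 m t, fun m => hvv1 m, ?_⟩
    simp only [hInv]
    intro m'
    rw [← P.aug_exact, LinearMap.mem_ker, Fintype.linearCombination_apply]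
    show ∑ t, (Matrix.of (fun t m => vv m t) * Q.A 0) t m' • P.g t = 0
    calc ∑ t, (Matrix.of (fun t m => vv m t) * Q.A 0) t m' • P.g t
        = ∑ t, ∑ q, Q.A 0 q m' * (vv q t • P.g t) := by
          refine Finset.sum_congr rfl fun t _ => ?_
          rw [Matrix.mul_apply, Finset.sum_smul]
          refine Finset.sum_congr rfl fun q _ => ?_
          show (vv q t * Q.A 0 q m') • P.g t = _
          rw [smul_eq_mul, smul_eq_mul]
          ring
      _ = ∑ q, Q.A 0 q m' * ∑ t, vv q t • P.g t := by
          rw [Finset.sum_comm]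
          exact Finset.sum_congr rfl fun q _ => by rw [Finset.mul_sum]
      _ = ∑ q, Q.A 0 q m' * (Q.g q * u0) := by
          refine Finset.sum_congr rfl fun q _ => ?_
          have h := hvv1 q
          rw [Fintype.linearCombination_apply] at h
          rw [h]
      _ = (∑ q, Q.A 0 q m' * Q.g q) * u0 := by
          rw [Finset.sum_mul]
          exact Finset.sum_congr rfl fun q _ => by ring
      _ = 0 := by
          have h0 : Fintype.linearCombination (MvPolynomial σ K) Q.g
              ((Q.A 0).mulVec (Pi.single m' 1)) = 0 := aug_comp_zero Q _
          rw [Fintype.linearCombination_apply] at h0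
          rw [show ∑ q, Q.A 0 q m' * Q.g q
            = ∑ q, ((Q.A 0).mulVec (Pi.single m' 1)) q • Q.g q from
            Finset.sum_congr rfl fun q _ => by
              simp [Matrix.mulVec_single], h0, zero_mul]
  -- step
  have hstep : ∀ j (M : Matrix (Fin (P.b j)) (Fin (Q.b j)) (MvPolynomial σ K)),
      (∀ t m, (M t m).IsHomogeneous 1) → Inv j M →
      ∃ M' : Matrix (Fin (P.b (j+1))) (Fin (Q.b (j+1))) (MvPolynomial σ K),
        (∀ t m, (M' t m).IsHomogeneous 1) ∧ (P.A j * M' = M * Q.A j) ∧ Inv (j+1) M' := by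
    intro j M hhom hinv
    simp only [hInv] at hinv
    have hcols : ∀ m' : Fin (Q.b (j+1)), ∃ v : Fin (P.b (j+1)) → MvPolynomial σ K,
        (P.A j).mulVecLin v = (fun t => (M * Q.A j) t m') ∧ ∀ q, (v q).IsHomogeneous 1 := by
      intro m'
      apply exists_homog_preimage_mat (P.A j) (hAP j) 1 _ _ (hinv m')
      intro p
      exact prod_col_homog M (Q.A j) hhom (hAQ j) p m'
    choose vv hvv1 hvv2 using hcols
    have hPAM : P.A j * Matrix.of (fun q m' => vv m' q) = M * Q.A j := by
      apply Matrix.ext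
      intro t m'
      have h := congrFun (hvv1 m') t
      simp only [Matrix.mulVecLin_apply, Matrix.mulVec, dotProduct] at h
      rw [Matrix.mul_apply, ← h]
      rfl
    refine ⟨Matrix.of (fun q m' => vv m' q), fun q m' => hvv2 m' q, hPAM, ?_⟩
    simp only [hInv]
    intro m''
    rw [← P.is_exact j, LinearMap.mem_ker]
    rw [mulVecLin_col (P.A j) _ m'']
    rw [← Matrix.mul_assoc, hPAM, Matrix.mul_assoc, hQAA j, Matrix.mul_zero]
    funext t
    simp
  -- recursion
  obtain ⟨M0, hM0hom, hM0aug, hM0inv⟩ := hbase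
  let Pack : ℕ → Type := fun j => {M : Matrix (Fin (P.b j)) (Fin (Q.b j))
    (MvPolynomial σ K) // (∀ t m, (M t m).IsHomogeneous 1) ∧ Inv j M}
  let stepC : ∀ j, Pack j → Pack (j+1) := fun j p =>
    ⟨Classical.choose (hstep j p.1 p.2.1 p.2.2),
      (Classical.choose_spec (hstep j p.1 p.2.1 p.2.2)).1,
      (Classical.choose_spec (hstep j p.1 p.2.1 p.2.2)).2.2⟩
  let psi : ∀ j, Pack j := fun j => Nat.rec ⟨M0, hM0hom, hM0inv⟩ stepC j
  have hsucc : ∀ j, (psi (j+1)).1 = Classical.choose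
      (hstep j (psi j).1 (psi j).2.1 (psi j).2.2) := fun j => rfl
  refine ⟨fun j => (psi j).1, fun j => (psi j).2.1, hM0aug, ?_⟩
  intro j
  exact (Classical.choose_spec (hstep j (psi j).1 (psi j).2.1 (psi j).2.2)).2.1
lemma cone (u0 : MvPolynomial σ K) (d : ℕ) (P : MinFreeRes J) (Q : MinFreeRes C)
    (hu : u0.IsHomogeneous d) (hC : ∀ r, r * u0 ∈ J ↔ r ∈ C)
    (hP : ∀ i k, P.dg i k = i + d) (hQ : ∀ i k, Q.dg i k = i + 1) :
    HasLinRes (J ⊔ Ideal.span {u0}) d := by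
  classical
  obtain ⟨ψ, hψhom, hψ0, hψsucc⟩ := psi_exists u0 d P Q hu hC hP hQ
  have hgP := ghom_of_lin P hP
  have hgQ := ghom_of_lin Q hQ
  have hAP := Ahom_of_lin P hP
  have hAQ := Ahom_of_lin Q hQ
  set cb : ℕ → ℕ := fun j => Nat.rec 1 (fun j' _ => Q.b j') j with hcb
  set BB : ∀ j, Matrix (Fin (cb j)) (Fin (cb (j+1))) (MvPolynomial σ K) :=
    fun j => Nat.rec (motive := fun j => Matrix (Fin (cb j)) (Fin (cb (j+1)))
      (MvPolynomial σ K)) (Matrix.of fun _ m => -(Q.g m)) (fun j' _ => -(Q.A j')) j with hBB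
  have hBB0 : BB 0 = Matrix.of fun _ m => -(Q.g m) := rfl
  haveI hsing : Subsingleton (Fin (cb 0)) := (inferInstance : Subsingleton (Fin 1))
  have hBB0aug : ∀ w : Fin (cb 1) → MvPolynomial σ K, ((BB 0).mulVec w) 0
      = -(Fintype.linearCombination (MvPolynomial σ K) Q.g w) := by
    intro w
    rw [Fintype.linearCombination_apply]
    show ∑ m, (BB 0) 0 m * w m = -∑ m, w m • Q.g m
    rw [← Finset.sum_neg_distrib]
    refine Finset.sum_congr rfl fun m _ => ?_
    show (BB 0) 0 m * w m = -(w m • Q.g m)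
    rw [show (BB 0) 0 m = -(Q.g m) from rfl, smul_eq_mul]
    ring
  have hBBsucc : ∀ j, BB (j+1) = -(Q.A j) := fun j => rfl
  set gg : (Fin (P.b 0) ⊕ Fin (cb 0)) → MvPolynomial σ K :=
    Sum.elim P.g (fun _ => u0) with hgg
  set AA : ∀ j, Matrix (Fin (P.b j) ⊕ Fin (cb j)) (Fin (P.b (j+1)) ⊕ Fin (cb (j+1)))
      (MvPolynomial σ K) := fun j => Matrix.fromBlocks (P.A j) (ψ j) 0 (BB j) with hAA
  -- component formulas
  have hAAtop : ∀ j (v : (Fin (P.b (j+1)) ⊕ Fin (cb (j+1))) → MvPolynomial σ K) t,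
      ((AA j).mulVecLin v) (Sum.inl t)
      = ((P.A j).mulVec (fun s => v (Sum.inl s))) t
        + ((ψ j).mulVec (fun m => v (Sum.inr m))) t := by
    intro j v t
    simp [hAA, Matrix.mulVecLin_apply, Matrix.mulVec, dotProduct,
      Fintype.sum_sum_type, Matrix.fromBlocks]
    rfl
  have hAAbot : ∀ j (v : (Fin (P.b (j+1)) ⊕ Fin (cb (j+1))) → MvPolynomial σ K) m,
      ((AA j).mulVecLin v) (Sum.inr m)
      = ((BB j).mulVec (fun q => v (Sum.inr q))) m := by
    intro j v m
    simp [hAA, Matrix.mulVecLin_apply, Matrix.mulVec, dotProduct,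
      Fintype.sum_sum_type, Matrix.fromBlocks]
  have hlcg : ∀ v : (Fin (P.b 0) ⊕ Fin (cb 0)) → MvPolynomial σ K,
      Fintype.linearCombination (MvPolynomial σ K) gg v
      = Fintype.linearCombination (MvPolynomial σ K) P.g
          (fun t => v (Sum.inl t)) + v (Sum.inr 0) * u0 := by
    intro v
    rw [Fintype.linearCombination_apply, Fintype.linearCombination_apply,
      Fintype.sum_sum_type]
    congr 1
    have h1 : ∑ m : Fin (cb 0), v (Sum.inr m) • gg (Sum.inr m)
        = v (Sum.inr 0) • gg (Sum.inr 0) := Fin.sum_univ_one _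
    rw [h1]
    simp [hgg]
  have hψaug : ∀ (w : Fin (Q.b 0) → MvPolynomial σ K),
      Fintype.linearCombination (MvPolynomial σ K) P.g
        ((ψ 0).mulVec w)
      = (Fintype.linearCombination (MvPolynomial σ K) Q.g w) * u0 := by
    intro w
    rw [Fintype.linearCombination_apply, Fintype.linearCombination_apply]
    calc ∑ t, ((ψ 0).mulVec w) t • P.g t
        = ∑ t, ∑ m, w m * (ψ 0 t m • P.g t) := by
          refine Finset.sum_congr rfl fun t _ => ?_
          rw [Matrix.mulVec, dotProduct, Finset.sum_smul]
          refine Finset.sum_congr rfl fun m _ => ?_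
          rw [smul_eq_mul, smul_eq_mul]; ring
      _ = ∑ m, w m * ∑ t, ψ 0 t m • P.g t := by
          rw [Finset.sum_comm]
          exact Finset.sum_congr rfl fun m _ => by rw [Finset.mul_sum]
      _ = ∑ m, w m * (Q.g m * u0) := by
          refine Finset.sum_congr rfl fun m _ => ?_
          have h := hψ0 m
          rw [Fintype.linearCombination_apply] at h
          rw [show (∑ t, ψ 0 t m • P.g t) = Q.g m * u0 from by simpa using h]
      _ = (∑ m, w m • Q.g m) * u0 := by
          rw [Finset.sum_mul]
          exact Finset.sum_congr rfl fun m _ => by rw [smul_eq_mul]; ring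
  have hBBker : ∀ j (vq : Fin (cb (j+1)) → MvPolynomial σ K),
      (BB j).mulVec vq = 0 → vq ∈ LinearMap.range ((Q.A j).mulVecLin) := by
    intro j vq h0
    cases j with
    | zero =>
      rw [← Q.aug_exact, LinearMap.mem_ker]
      have h1 := congrFun h0 0
      rw [hBB0aug vq] at h1
      rw [Pi.zero_apply] at h1
      have h2 := congrArg Neg.neg h1
      rwa [neg_neg, neg_zero] at h2
    | succ j' =>
      rw [← Q.is_exact j', LinearMap.mem_ker]
      rw [hBBsucc j', Matrix.neg_mulVec] at h0
      have : (Q.A j').mulVec vq = 0 := by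
        have := congrArg Neg.neg h0
        rwa [neg_neg, neg_zero] at this
      rw [Matrix.mulVecLin_apply]
      exact this
  have hBBcomp : ∀ j (uq : Fin (cb (j+2)) → MvPolynomial σ K),
      (BB j).mulVec ((BB (j+1)).mulVec uq) = 0 := by
    intro j uq
    rw [hBBsucc j, Matrix.neg_mulVec]
    cases j with
    | zero =>
      funext x
      have hx : x = 0 := Subsingleton.elim _ _
      subst hx
      rw [hBB0aug, map_neg, neg_neg]
      rw [show (Fintype.linearCombination (MvPolynomial σ K) Q.g)
        ((Q.A 0).mulVec uq) = 0 from aug_comp_zero Q uq]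
      simp
    | succ j' =>
      rw [hBBsucc j', Matrix.neg_mulVec, Matrix.mulVec_neg, neg_neg]
      exact matrix_comp_zero Q j' uq
  -- apply the transfer lemma
  apply hasLinRes_of d (fun j => Fin (P.b j) ⊕ Fin (cb j)) gg AA
  · intro x
    cases x with
    | inl t => exact hgP t
    | inr m => exact hu
  · intro j x y
    cases x with
    | inl t =>
      cases y with
      | inl s =>
        rcases hAP j t s with h0 | hh
        · exact Or.inl (by simp [hAA, Matrix.fromBlocks, h0])
        · exact Or.inr (by simpa [hAA, Matrix.fromBlocks] using hh)
      | inr m => exact Or.inr (by simpa [hAA, Matrix.fromBlocks] using hψhom j t m)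
    | inr m =>
      cases y with
      | inl s => exact Or.inl (by simp [hAA, Matrix.fromBlocks])
      | inr m' =>
        have hentry : AA j (Sum.inr m) (Sum.inr m') = BB j m m' := by
          simp [hAA, Matrix.fromBlocks]
        rw [hentry]
        cases j with
        | zero =>
          rw [hBB0]
          exact Or.inr ((hgQ m').neg)
        | succ j' =>
          rw [hBBsucc j']
          rcases hAQ j' m m' with h0 | hh
          · exact Or.inl (by simp [h0])
          · exact Or.inr (by simpa using hh.neg)
  · -- aug_range
    apply le_antisymm
    · rintro x ⟨v, rfl⟩
      rw [hlcg]
      refine Submodule.add_mem _ (Submodule.mem_sup_left ?_) (Submodule.mem_sup_right ?_)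
      · have h : Fintype.linearCombination (MvPolynomial σ K) P.g
            (fun t => v (Sum.inl t)) ∈ LinearMap.range (Fintype.linearCombination
            (MvPolynomial σ K) P.g) := ⟨_, rfl⟩
        rwa [P.aug_range] at h
      · exact Ideal.mul_mem_left _ _ (Ideal.subset_span (Set.mem_singleton _))
    · rw [sup_le_iff]
      constructor
      · intro x hx
        rw [← P.aug_range] at hx
        obtain ⟨vp, rfl⟩ := hx
        refine ⟨Sum.elim vp 0, ?_⟩
        rw [hlcg]
        simp [Fintype.linearCombination_apply]
      · rw [Ideal.span_le]
        rintro x rfl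
        refine ⟨Sum.elim 0 1, ?_⟩
        rw [hlcg]
        simp [Fintype.linearCombination_apply]
  · -- aug_exact
    apply le_antisymm
    · intro v hv
      rw [LinearMap.mem_ker, hlcg] at hv
      have h1 : v (Sum.inr 0) * u0 ∈ J := by
        have h2 : v (Sum.inr 0) * u0 = -(Fintype.linearCombination (MvPolynomial σ K) P.g (fun t => v (Sum.inl t))) :=
          eq_neg_of_add_eq_zero_right hv
        rw [h2]
        apply neg_mem
        have h : Fintype.linearCombination (MvPolynomial σ K) P.g
            (fun t => v (Sum.inl t)) ∈ LinearMap.range (Fintype.linearCombination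
            (MvPolynomial σ K) P.g) := ⟨_, rfl⟩
        rwa [P.aug_range] at h
      have h2 : v (Sum.inr 0) ∈ C := (hC _).1 h1
      have h3 : v (Sum.inr 0) ∈ LinearMap.range (Fintype.linearCombination
          (MvPolynomial σ K) Q.g) := by
        rw [Q.aug_range]; exact h2
      obtain ⟨wq, hwq⟩ := h3
      have h4 : (fun t => v (Sum.inl t)) + (ψ 0).mulVec wq ∈ LinearMap.range
          ((P.A 0).mulVecLin) := by
        rw [← P.aug_exact, LinearMap.mem_ker, map_add, hψaug, hwq, hv]
      obtain ⟨up, hup⟩ := h4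
      refine ⟨Sum.elim up (fun m => -(wq m)), ?_⟩
      funext x
      cases x with
      | inl t =>
        rw [hAAtop]
        have htop : (P.A 0).mulVec (fun s => Sum.elim up (fun m => -(wq m)) (Sum.inl s))
            = (fun t => v (Sum.inl t)) + (ψ 0).mulVec wq := by
          rw [show (fun s => Sum.elim up (fun m => -(wq m)) (Sum.inl s)) = up from rfl]
          rw [← hup]; rfl
        rw [htop]
        have hbot : (ψ 0).mulVec (fun m => Sum.elim up (fun m => -(wq m)) (Sum.inr m))
            = -((ψ 0).mulVec wq) := by
          rw [show (fun m => Sum.elim up (fun m' => -(wq m')) (Sum.inr m))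
            = -wq from rfl, Matrix.mulVec_neg]
        rw [hbot]
        simp
      | inr m =>
        rw [hAAbot]
        have hm : m = 0 := Subsingleton.elim _ _
        subst hm
        rw [show (fun q => Sum.elim up (fun m => -(wq m)) (Sum.inr q)) = -wq from rfl]
        rw [hBB0aug, map_neg, neg_neg, hwq]
    · rintro v ⟨u, rfl⟩
      rw [LinearMap.mem_ker, hlcg]
      simp only [hAAtop, hAAbot]
      rw [show (fun t => ((P.A 0).mulVec fun s => u (Sum.inl s)) t
            + ((ψ 0).mulVec fun m => u (Sum.inr m)) t)
          = (((P.A 0).mulVec fun s => u (Sum.inl s))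
            + ((ψ 0).mulVec fun m => u (Sum.inr m))) from rfl]
      rw [map_add, hψaug]
      have h1 : Fintype.linearCombination (MvPolynomial σ K) P.g
          ((P.A 0).mulVec fun s => u (Sum.inl s)) = 0 := aug_comp_zero P _
      rw [h1, zero_add, hBB0aug]
      ring
  · -- is_exact
    intro j
    apply le_antisymm
    · intro v hv
      rw [LinearMap.mem_ker] at hv
      have hvtop : (P.A j).mulVec (fun s => v (Sum.inl s))
          + (ψ j).mulVec (fun m => v (Sum.inr m)) = 0 := by
        funext t
        have := congrFun hv (Sum.inl t)
        rw [hAAtop] at this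
        exact this
      have hvbot : (BB j).mulVec (fun m => v (Sum.inr m)) = 0 := by
        funext m
        have := congrFun hv (Sum.inr m)
        rw [hAAbot] at this
        exact this
      obtain ⟨wq, hwq⟩ := hBBker j _ hvbot
      rw [Matrix.mulVecLin_apply] at hwq
      have h5 : (P.A j).mulVec ((fun s => v (Sum.inl s)) + (ψ (j+1)).mulVec wq) = 0 := by
        rw [Matrix.mulVec_add]
        have h6 : (P.A j).mulVec ((ψ (j+1)).mulVec wq) = (ψ j).mulVec ((Q.A j).mulVec wq) := by
          rw [Matrix.mulVec_mulVec, Matrix.mulVec_mulVec, hψsucc j]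
        rw [h6, hwq]
        exact hvtop
      have h7 : (fun s => v (Sum.inl s)) + (ψ (j+1)).mulVec wq ∈ LinearMap.range
          ((P.A (j+1)).mulVecLin) := by
        rw [← P.is_exact j, LinearMap.mem_ker, Matrix.mulVecLin_apply]
        exact h5
      obtain ⟨up, hup⟩ := h7
      rw [Matrix.mulVecLin_apply] at hup
      refine ⟨Sum.elim up (fun m => -(wq m)), ?_⟩
      funext x
      cases x with
      | inl t =>
        rw [hAAtop]
        rw [show (fun s => Sum.elim up (fun m => -(wq m)) (Sum.inl s)) = up from rfl]
        rw [show (fun m => Sum.elim up (fun m' => -(wq m')) (Sum.inr m)) = -wq from rfl]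
        rw [Matrix.mulVec_neg, hup]
        simp
      | inr m =>
        rw [hAAbot]
        rw [show (fun q => Sum.elim up (fun m' => -(wq m')) (Sum.inr q)) = -wq from rfl]
        rw [hBBsucc j, Matrix.neg_mulVec, Matrix.mulVec_neg, neg_neg, hwq]
    · rintro v ⟨u, rfl⟩
      rw [LinearMap.mem_ker]
      funext x
      cases x with
      | inl t =>
        rw [hAAtop]
        have ht1 : (fun s => ((AA (j+1)).mulVecLin u) (Sum.inl s))
            = (P.A (j+1)).mulVec (fun s => u (Sum.inl s))
              + (ψ (j+1)).mulVec (fun m => u (Sum.inr m)) := by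
          funext s
          rw [hAAtop]
          rfl
        have ht2 : (fun m => ((AA (j+1)).mulVecLin u) (Sum.inr m))
            = (BB (j+1)).mulVec (fun q => u (Sum.inr q)) := by
          funext m
          rw [hAAbot]
        rw [ht1, ht2, Matrix.mulVec_add, hBBsucc j, Matrix.neg_mulVec, Matrix.mulVec_neg]
        have hz1 : (P.A j).mulVec ((P.A (j+1)).mulVec fun s => u (Sum.inl s)) = 0 :=
          matrix_comp_zero P j _
        have hz2 : (P.A j).mulVec ((ψ (j+1)).mulVec fun m => u (Sum.inr m))
            = (ψ j).mulVec ((Q.A j).mulVec fun m => u (Sum.inr m)) := by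
          rw [Matrix.mulVec_mulVec, Matrix.mulVec_mulVec, hψsucc j]
        rw [hz1, hz2]
        simp
        exact add_neg_cancel _
      | inr m =>
        rw [hAAbot]
        have ht2 : (fun q => ((AA (j+1)).mulVecLin u) (Sum.inr q))
            = (BB (j+1)).mulVec (fun q => u (Sum.inr q)) := by
          funext q
          rw [hAAbot]
        rw [ht2]
        have := congrFun (hBBcomp j (fun q => u (Sum.inr q))) m
        rw [this]
        rfl

end TESTA2

section TESTA4
open MvPolynomial StmtAux

lemma varRes {K : Type} [Field K] {n : ℕ} (s : Finset (Fin n)) :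
    HasLinRes (Ideal.span ((fun i => (X i : MvPolynomial (Fin n) K)) ''
      (s : Set (Fin n)))) 1 := by
  classical
  induction s using Finset.induction_on with
  | empty =>
    rw [Finset.coe_empty, Set.image_empty, Ideal.span_empty]
    exact ⟨zeroRes, fun i k => k.elim0⟩
  | @insert a s ha ih =>
    obtain ⟨Q, hQ⟩ := ih
    have hCspan : ∀ r : MvPolynomial (Fin n) K,
        r * X a ∈ Ideal.span ((fun i => (X i : MvPolynomial (Fin n) K)) '' ↑s)
        ↔ r ∈ Ideal.span ((fun i => (X i : MvPolynomial (Fin n) K)) '' ↑s) := by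
      intro r
      constructor
      · intro h
        rw [mem_ideal_span_X_image] at h ⊢
        intro μ hμ
        have hμ' : μ + Finsupp.single a 1 ∈ (r * X a).support := by
          rw [mem_support_iff, coeff_mul_X]
          exact mem_support_iff.1 hμ
        obtain ⟨b, hbs, hb⟩ := h _ hμ'
        refine ⟨b, hbs, ?_⟩
        have hba : b ≠ a := fun hh => ha (hh ▸ hbs)
        rwa [Finsupp.add_apply, Finsupp.single_apply,
          if_neg (fun hh => hba hh.symm), add_zero] at hb
      · intro h
        exact Ideal.mul_mem_right _ _ h
    have hres := cone (X a) 1 Q Q (isHomogeneous_X K a) hCspan hQ hQ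
    have hEq : Ideal.span ((fun i => (X i : MvPolynomial (Fin n) K)) '' ↑(insert a s))
        = Ideal.span ((fun i => (X i : MvPolynomial (Fin n) K)) '' ↑s)
          ⊔ Ideal.span {X a} := by
      rw [Finset.coe_insert, Set.image_insert_eq, Ideal.span_insert]
      exact sup_comm _ _
    rw [hEq]
    exact hres

lemma keyA {K : Type} [Field K] {n k d : ℕ} (w : Fin k → (Fin n →₀ ℕ))
    (hdeg : ∀ j, mdeg (w j) = d)
    (hlq : ∀ i : Fin k, genByVars (Submodule.colon
      (Ideal.span ((fun j => mon K (w j)) '' {j | j < i}))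
      (Ideal.span {mon K (w i)}))) :
    ∀ i : Fin k, HasLinRes (Ideal.span ((fun j => mon K (w j)) '' {j | j ≤ i})) d := by
  classical
  have step : ∀ i : Fin k,
      HasLinRes (Ideal.span ((fun j => mon K (w j)) '' {j | j < i})) d →
      HasLinRes (Ideal.span ((fun j => mon K (w j)) '' {j | j ≤ i})) d := by
    intro i hPP
    obtain ⟨P, hP⟩ := hPP
    obtain ⟨A, hA⟩ := hlq i
    have hQc : HasLinRes (Submodule.colon
        (Ideal.span ((fun j => mon K (w j)) '' {j | j < i}))
        (Ideal.span {mon K (w i)})) 1 := by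
      have hAs : Ideal.span ((fun i => (X i : MvPolynomial (Fin n) K)) ''
          ↑(A.toFinite.toFinset)) = Submodule.colon
          (Ideal.span ((fun j => mon K (w j)) '' {j | j < i}))
          (Ideal.span {mon K (w i)}) := by
        rw [Set.Finite.coe_toFinset]
        exact hA.symm
      rw [← hAs]
      exact varRes _
    obtain ⟨Qc, hQcdg⟩ := hQc
    have hcolon : ∀ r, r * mon K (w i) ∈
        Ideal.span ((fun j => mon K (w j)) '' {j | j < i}) ↔
        r ∈ Submodule.colon (Ideal.span ((fun j => mon K (w j)) '' {j | j < i}))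
          (Ideal.span {mon K (w i)}) :=
      fun r => Iff.symm Ideal.mem_colon_span_singleton
    have hmon_hom : (mon K (w i)).IsHomogeneous d := by
      rw [← hdeg i]; exact mon_isHomog _
    have hres := cone (mon K (w i)) d P Qc hmon_hom hcolon hP hQcdg
    have hEq : Ideal.span ((fun j => mon K (w j)) '' {j | j ≤ i})
        = Ideal.span ((fun j => mon K (w j)) '' {j | j < i})
          ⊔ Ideal.span {mon K (w i)} := by
      have hset : {j : Fin k | j ≤ i} = insert i {j : Fin k | j < i} := by
        ext j
        simp only [Set.mem_setOf_eq, Set.mem_insert_iff]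
        constructor
        · intro h
          rcases lt_or_eq_of_le h with h | h
          · exact Or.inr h
          · exact Or.inl h
        · rintro (rfl | h)
          · exact le_refl _
          · exact le_of_lt h
      rw [hset, Set.image_insert_eq, Ideal.span_insert]
      exact sup_comm _ _
    rw [hEq]
    exact hres
  suffices h : ∀ m : ℕ, ∀ i : Fin k, i.val = m →
      HasLinRes (Ideal.span ((fun j => mon K (w j)) '' {j | j ≤ i})) d by
    intro i
    exact h i.val i rfl
  intro m
  induction m with
  | zero =>
    intro i hi
    apply step
    have hbot : {j : Fin k | j < i} = (∅ : Set (Fin k)) := by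
      ext j
      simp only [Set.mem_setOf_eq, Set.mem_empty_iff_false, iff_false]
      intro hj
      rw [Fin.lt_def, hi] at hj
      omega
    rw [hbot, Set.image_empty, Ideal.span_empty]
    exact ⟨zeroRes, fun a b => b.elim0⟩
  | succ m ih =>
    intro i hi
    apply step
    have hik : m < k := by omega
    have hset : {j : Fin k | j < i} = {j : Fin k | j ≤ (⟨m, hik⟩ : Fin k)} := by
      ext j
      simp only [Set.mem_setOf_eq]
      rw [Fin.lt_def, Fin.le_def, hi]
      show j.val < m + 1 ↔ j.val ≤ m
      omega
    rw [hset]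
    exact ih ⟨m, hik⟩ rfl
end TESTA4

open StmtAux in
/-- A monomial ideal `I` generated in a single degree `d`, with minimal
monomial generators `u_1, …, u_k`, has linear quotients (i.e. for some ordering the colon
ideals `(u_1, …, u_{i-1}) : u_i` are generated by variables) if and only if there is an
ordering `u_1, …, u_k` of `G(I)` such that the ideal `(u_1, …, u_i)` has a linear
resolution for each `i = 1, …, k`. -/
theorem stmt_4 {K : Type} [Field K] {n d k : ℕ} (u : Fin k → (Fin n →₀ ℕ))
    (hinj : Function.Injective u) (hmin : IsMinGenSet (Set.range u))
    (hdeg : ∀ i, mdeg (u i) = d) :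
    (∃ σ : Equiv.Perm (Fin k), ∀ i : Fin k,
        genByVars (Submodule.colon
          (Ideal.span ((fun j => mon K (u (σ j))) '' {j | j < i}))
          (Ideal.span {mon K (u (σ i))})))
    ↔ (∃ σ : Equiv.Perm (Fin k), ∀ i : Fin k,
        ∃ e, HasLinRes (Ideal.span ((fun j => mon K (u (σ j))) '' {j | j ≤ i})) e) := by
  constructor
  · rintro ⟨σ, h⟩
    exact ⟨σ, fun i => ⟨d, keyA (fun j => u (σ j)) (fun j => hdeg _) h i⟩⟩
  · rintro ⟨σ, h⟩
    refine ⟨σ, fun i => ?_⟩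
    obtain ⟨e, he⟩ := h i
    have hrange : Set.range (fun j => u (σ j)) = Set.range u := by
      ext x
      constructor
      · rintro ⟨j, rfl⟩
        exact ⟨σ j, rfl⟩
      · rintro ⟨j, rfl⟩
        exact ⟨σ.symm j, by simp⟩
    exact keyB (fun j => u (σ j)) (fun a b hab => σ.injective (hinj hab))
      (by rw [hrange]; exact hmin) d (fun j => hdeg _) i e he
end

section
/- A monomial ideal I generated in degree 2 is quasi-linear if and only if its polarization I^p is quasi-linear. -/
open MvPolynomial

/-- Polarization of an exponent vector with entries `≤ 2`: the power `x_i^a` (`a ≤ 2`)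
is replaced by the squarefree product `x_{i,1} ⋯ x_{i,a}` of new variables. -/
noncomputable def polExp {n : ℕ} (u : Fin n →₀ ℕ) : (Fin n × Fin 2) →₀ ℕ :=
  ∑ p : Fin n × Fin 2, if (p.2 : ℕ) < u p.1 then Finsupp.single p 1 else 0

section auxlemmas


variable {K : Type} [Field K] {σ : Type}

lemma mem_monIdeal {S : Set (σ →₀ ℕ)} {f : MvPolynomial σ K} :
    f ∈ monIdeal K S ↔ ∀ m ∈ f.support, ∃ s ∈ S, s ≤ m := by
  unfold monIdeal mon
  exact mem_ideal_span_monomial_image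

lemma mon_mem_monIdeal {S : Set (σ →₀ ℕ)} {v m : σ →₀ ℕ} (hv : v ∈ S) (h : v ≤ m) :
    mon K m ∈ monIdeal K S := by
  classical
  rw [mem_monIdeal]
  intro m' hm'
  rw [mon, support_monomial, if_neg one_ne_zero, Finset.mem_singleton] at hm'
  exact hm' ▸ ⟨v, hv, h⟩

lemma colon_monIdeal {T : Set (σ →₀ ℕ)} {u : σ →₀ ℕ} :
    Submodule.colon (monIdeal K T) (Ideal.span {mon K u}) = monIdeal K ((· - u) '' T) := by
  ext f
  rw [Submodule.mem_colon]
  constructor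
  · intro h
    have h1 : f * mon K u ∈ monIdeal K T :=
      h (mon K u) (Ideal.subset_span rfl)
    rw [mem_monIdeal] at h1
    rw [mem_monIdeal]
    intro m hm
    have hmem : m + u ∈ (f * mon K u).support := by
      rw [mem_support_iff] at hm ⊢
      rw [mon, coeff_mul_monomial]
      simpa using hm
    obtain ⟨v, hv, hle⟩ := h1 (m + u) hmem
    exact ⟨v - u, ⟨v, hv, rfl⟩, tsub_le_iff_right.mpr hle⟩
  · intro hf p hp
    have key : monIdeal K ((· - u) '' T) * Ideal.span {mon K u} ≤ monIdeal K T := by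
      rw [monIdeal, Ideal.span_mul_span, Ideal.span_le]
      rintro x hx
      rw [Set.mem_mul] at hx
      obtain ⟨a, ⟨w, ⟨v, hv, rfl⟩, rfl⟩, b, rfl, rfl⟩ := hx
      have : mon (σ := σ) K (v - u) * mon K u = mon K (v - u + u) := by
        rw [mon, mon, mon, monomial_mul, one_mul]
      rw [this]
      exact mon_mem_monIdeal hv le_tsub_add
    rw [smul_eq_mul]
    exact key (Ideal.mul_mem_mul hf hp)

lemma le_single_cases {m : σ →₀ ℕ} {k : σ} (h : m ≤ Finsupp.single k 1) :
    m = 0 ∨ m = Finsupp.single k 1 := by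
  classical
  rw [Finsupp.le_def] at h
  by_cases hk : m k = 0
  · left
    ext j
    simp only [Finsupp.coe_zero, Pi.zero_apply]
    by_cases hj : j = k
    · subst hj; exact hk
    · have := h j
      rw [Finsupp.single_apply, if_neg (Ne.symm hj)] at this
      omega
  · right
    ext j
    by_cases hj : k = j
    · subst hj
      have := h k
      rw [Finsupp.single_eq_same] at this ⊢
      omega
    · have := h j
      rw [Finsupp.single_eq_of_ne' hj] at this ⊢
      omega

lemma genByVars_monIdeal {M : Set (σ →₀ ℕ)} (h0 : (0 : σ →₀ ℕ) ∉ M) :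
    genByVars (monIdeal K M) ↔
      ∀ m ∈ M, ∃ k, Finsupp.single k 1 ∈ M ∧ m k ≠ 0 := by
  classical
  constructor
  · rintro ⟨A, hA⟩ m hm
    have hmem : mon K m ∈ Ideal.span ((fun i => (X i : MvPolynomial σ K)) '' A) := by
      rw [← hA]; exact Ideal.subset_span ⟨m, hm, rfl⟩
    rw [mem_ideal_span_X_image] at hmem
    obtain ⟨i, hiA, hi⟩ := hmem m (by
      rw [mon, support_monomial, if_neg one_ne_zero]; exact Finset.mem_singleton_self m)
    refine ⟨i, ?_, hi⟩
    have hXi : (X i : MvPolynomial σ K) ∈ monIdeal K M := by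
      rw [hA]; exact Ideal.subset_span ⟨i, hiA, rfl⟩
    rw [mem_monIdeal] at hXi
    obtain ⟨s, hs, hsle⟩ := hXi (Finsupp.single i 1) (by
      rw [support_X]; exact Finset.mem_singleton_self _)
    rcases le_single_cases hsle with rfl | rfl
    · exact absurd hs h0
    · exact hs
  · intro h
    refine ⟨{k | Finsupp.single k 1 ∈ M}, le_antisymm ?_ ?_⟩
    · rw [monIdeal, Ideal.span_le]
      rintro x ⟨m, hm, rfl⟩
      obtain ⟨k, hkM, hk⟩ := h m hm
      have hle : Finsupp.single k 1 ≤ m := Finsupp.single_le_iff.mpr (by omega)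
      have : mon (σ := σ) K m = X k * mon K (m - Finsupp.single k 1) := by
        rw [mon, mon, X, monomial_mul, one_mul, add_tsub_cancel_of_le hle]
      rw [this]
      exact Ideal.mul_mem_right _ _ (Ideal.subset_span ⟨k, hkM, rfl⟩)
    · rw [Ideal.span_le]
      rintro x ⟨k, hk, rfl⟩
      show (X k : MvPolynomial σ K) ∈ (monIdeal K M : Set (MvPolynomial σ K))
      have : (X k : MvPolynomial σ K) = mon K (Finsupp.single k 1) := by
        rw [mon, X]
      rw [this]
      exact Ideal.subset_span ⟨_, hk, rfl⟩



lemma apply_le_mdeg {σ : Type} (u : σ →₀ ℕ) (k : σ) : u k ≤ mdeg u := by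
  rw [mdeg]
  by_cases h : k ∈ u.support
  · exact Finset.single_le_sum (f := fun i => u i) (fun _ _ => Nat.zero_le _) h
  · rw [Finsupp.notMem_support_iff.mp h]
    exact Nat.zero_le _

lemma polExp_apply {n : ℕ} (u : Fin n →₀ ℕ) (p : Fin n × Fin 2) :
    polExp u p = if (p.2 : ℕ) < u p.1 then 1 else 0 := by
  classical
  rw [polExp, Finsupp.finset_sum_apply]
  rw [Finset.sum_eq_single p]
  · split_ifs with h
    · rw [Finsupp.single_eq_same]
    · rfl
  · intro q _ hq
    split_ifs with h
    · exact Finsupp.single_eq_of_ne' hq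
    · rfl
  · intro h
    exact absurd (Finset.mem_univ p) h

lemma polExp_sub_apply {n : ℕ} (u v : Fin n →₀ ℕ) (p : Fin n × Fin 2) :
    (polExp v - polExp u) p = if u p.1 ≤ (p.2 : ℕ) ∧ (p.2 : ℕ) < v p.1 then 1 else 0 := by
  rw [Finsupp.tsub_apply, polExp_apply, polExp_apply]
  split_ifs <;> omega

lemma pol_sub_eq_zero {n : ℕ} {u v : Fin n →₀ ℕ} (hv : ∀ k, v k ≤ 2)
    (h : polExp v - polExp u = 0) : v ≤ u := by
  rw [Finsupp.le_def]
  intro k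
  by_contra hk
  push_neg at hk
  have h1 : u k < 2 := by have := hv k; omega
  have h2 := Finsupp.ext_iff.mp h (k, ⟨u k, h1⟩)
  rw [polExp_sub_apply] at h2
  simp only [Finsupp.coe_zero, Pi.zero_apply] at h2
  rw [if_pos ⟨le_refl _, hk⟩] at h2
  exact one_ne_zero h2

lemma polExp_inj {n : ℕ} {u v : Fin n →₀ ℕ} (hu : ∀ k, u k ≤ 2) (hv : ∀ k, v k ≤ 2)
    (h : polExp u = polExp v) : u = v := by
  ext k
  have h0 := Finsupp.ext_iff.mp h (k, 0)
  have h1 := Finsupp.ext_iff.mp h (k, 1)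
  rw [polExp_apply, polExp_apply] at h0 h1
  simp only [Fin.val_zero, Fin.val_one] at h0 h1
  have := hu k; have := hv k
  split_ifs at h0 h1 <;> omega

lemma pol_sub_single {n : ℕ} {u w : Fin n →₀ ℕ} (hw2 : ∀ j, w j ≤ 2) {k : Fin n}
    (h : w - u = Finsupp.single k 1) :
    ∃ hk : u k < 2, polExp w - polExp u = Finsupp.single (k, (⟨u k, hk⟩ : Fin 2)) 1 := by
  have hwk : w k = u k + 1 := by
    have := Finsupp.ext_iff.mp h k
    rw [Finsupp.tsub_apply, Finsupp.single_eq_same] at this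
    omega
  have hk : u k < 2 := by have := hw2 k; omega
  have hwj : ∀ j, j ≠ k → w j ≤ u j := by
    intro j hj
    have := Finsupp.ext_iff.mp h j
    rw [Finsupp.tsub_apply, Finsupp.single_eq_of_ne' (Ne.symm hj)] at this
    omega
  refine ⟨hk, ?_⟩
  ext ⟨j, t⟩
  rw [polExp_sub_apply, Finsupp.single_apply]
  rcases eq_or_ne k j with rfl | hjk
  · have heq : (((k, ⟨u k, hk⟩) : Fin n × Fin 2) = (k, t)) ↔ (u k = (t : ℕ)) := by
      simp [Prod.ext_iff, Fin.ext_iff]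
    simp only [heq]
    split_ifs <;> omega
  · rw [if_neg (by have := hwj j (Ne.symm hjk); omega : ¬(u j ≤ (t:ℕ) ∧ (t:ℕ) < w j)),
      if_neg (by simp [Prod.ext_iff]; intro h'; exact absurd h' hjk)]



lemma single_of_pol_sub {n : ℕ} {u w : Fin n →₀ ℕ} (hu2 : ∀ j, u j ≤ 2) (hw2 : ∀ j, w j ≤ 2)
    {k : Fin n} {t : Fin 2} (h : polExp w - polExp u = Finsupp.single (k, t) 1) :
    w - u = Finsupp.single k 1 ∧ (t : ℕ) = u k := by
  have H : ∀ (j : Fin n) (s : Fin 2),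
      (if u j ≤ (s : ℕ) ∧ (s : ℕ) < w j then 1 else 0) =
        (if ((k, t) : Fin n × Fin 2) = (j, s) then 1 else 0) := by
    intro j s
    have := Finsupp.ext_iff.mp h (j, s)
    rwa [polExp_sub_apply, Finsupp.single_apply] at this
  have hkt := H k t
  rw [if_pos rfl] at hkt
  have hkt' : u k ≤ (t : ℕ) ∧ (t : ℕ) < w k := by
    by_contra hc
    rw [if_neg hc] at hkt
    exact one_ne_zero hkt.symm
  -- t = u k
  have huk2 : u k < 2 := lt_of_le_of_lt hkt'.1 t.isLt
  have ht : (t : ℕ) = u k := by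
    by_contra hne
    have hne' : (((k, t) : Fin n × Fin 2) = (k, ⟨u k, huk2⟩)) ↔ False := by
      simp [Prod.ext_iff, Fin.ext_iff]
      omega
    have := H k ⟨u k, huk2⟩
    simp only [hne', if_false] at this
    rw [if_pos ⟨le_refl _, by omega⟩] at this
    exact one_ne_zero this
  have hwk : w k = u k + 1 := by
    by_contra hne
    have hge : u k + 2 ≤ w k := by omega
    have hu0 : u k = 0 := by have := hw2 k; omega
    have h1lt : (1 : ℕ) < 2 := by omega
    have hne' : (((k, t) : Fin n × Fin 2) = (k, ⟨1, h1lt⟩)) ↔ False := by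
      simp [Prod.ext_iff, Fin.ext_iff]
      omega
    have := H k ⟨1, h1lt⟩
    simp only [hne', if_false] at this
    rw [if_pos ⟨by omega, by omega⟩] at this
    exact one_ne_zero this
  have hwj : ∀ j, j ≠ k → w j ≤ u j := by
    intro j hj
    by_contra hc
    push_neg at hc
    have huj2 : u j < 2 := by have := hw2 j; omega
    have hne' : (((k, t) : Fin n × Fin 2) = (j, ⟨u j, huj2⟩)) ↔ False := by
      simp [Prod.ext_iff, Fin.ext_iff]
      intro h' _
      exact hj ((Fin.ext h').symm)
    have := H j ⟨u j, huj2⟩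
    simp only [hne', if_false] at this
    rw [if_pos ⟨le_refl _, by omega⟩] at this
    exact one_ne_zero this
  refine ⟨?_, ht⟩
  ext j
  rw [Finsupp.tsub_apply, Finsupp.single_apply]
  rcases eq_or_ne k j with rfl | hjk
  · rw [if_pos rfl]; omega
  · rw [if_neg hjk]
    have := hwj j (Ne.symm hjk)
    omega

end auxlemmas

/-- A monomial ideal `I` generated in degree `2` (with minimal monomial
generating set `S`) is quasi-linear if and only if its polarization `I^p` is
quasi-linear. -/
theorem stmt_8 {K : Type} [Field K] {n : ℕ} (S : Set (Fin n →₀ ℕ))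
    (hmin : IsMinGenSet S) (hdeg : ∀ v ∈ S, mdeg v = 2) :
    QuasiLinear K S ↔ QuasiLinear K (polExp '' S) := by
  classical
  have hS2 : ∀ v ∈ S, ∀ k, v k ≤ 2 := fun v hv k => by
    have := apply_le_mdeg v k
    rw [hdeg v hv] at this
    exact this
  have himg : ∀ u ∈ S, (polExp '' S) \ {polExp u} = polExp '' (S \ {u}) := by
    intro u hu
    ext x
    constructor
    · rintro ⟨⟨v, hv, rfl⟩, hne⟩
      refine ⟨v, ⟨hv, fun h => ?_⟩, rfl⟩
      rw [Set.mem_singleton_iff] at h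
      subst h
      exact hne rfl
    · rintro ⟨v, ⟨hv, hvu⟩, rfl⟩
      refine ⟨⟨v, hv, rfl⟩, fun h => hvu ?_⟩
      rw [Set.mem_singleton_iff] at h
      exact polExp_inj (hS2 v hv) (hS2 u hu) h
  have h0L : ∀ u ∈ S, (0 : Fin n →₀ ℕ) ∉ (· - u) '' (S \ {u}) := by
    rintro u hu ⟨v, ⟨hv, hvu⟩, hv0⟩
    have hle : v ≤ u := by
      rw [Finsupp.le_def]
      intro k
      have h1 := Finsupp.ext_iff.mp hv0 k
      rw [Finsupp.tsub_apply] at h1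
      simp only [Finsupp.coe_zero, Pi.zero_apply] at h1
      omega
    exact hvu (hmin v hv u hu hle)
  have h0R : ∀ u ∈ S,
      (0 : (Fin n × Fin 2) →₀ ℕ) ∉ ((· - polExp u) ∘ polExp) '' (S \ {u}) := by
    rintro u hu ⟨v, ⟨hv, hvu⟩, hv0⟩
    exact hvu (hmin v hv u hu (pol_sub_eq_zero (hS2 v hv) hv0))
  constructor
  · intro hQL
    rintro _ ⟨u, hu, rfl⟩
    have hL := hQL u hu
    rw [colon_monIdeal, genByVars_monIdeal (h0L u hu)] at hL
    rw [himg u hu, colon_monIdeal, ← Set.image_comp,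
      genByVars_monIdeal (h0R u hu)]
    rintro _ ⟨v, hvmem, rfl⟩
    obtain ⟨k, hkmem, hk⟩ := hL (v - u) ⟨v, hvmem, rfl⟩
    obtain ⟨w, hwmem, hw⟩ := hkmem
    obtain ⟨hklt, hpol⟩ := pol_sub_single (hS2 w hwmem.1) hw
    refine ⟨(k, ⟨u k, hklt⟩), ⟨w, hwmem, hpol⟩, ?_⟩
    show (polExp v - polExp u) (k, ⟨u k, hklt⟩) ≠ 0
    rw [polExp_sub_apply]
    have hvk : u k < v k := by
      rw [Finsupp.tsub_apply] at hk
      omega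
    rw [if_pos ⟨le_refl _, hvk⟩]
    exact one_ne_zero
  · intro hQR u hu
    have hR := hQR (polExp u) ⟨u, hu, rfl⟩
    rw [himg u hu, colon_monIdeal, ← Set.image_comp,
      genByVars_monIdeal (h0R u hu)] at hR
    rw [colon_monIdeal, genByVars_monIdeal (h0L u hu)]
    rintro _ ⟨v, hvmem, rfl⟩
    obtain ⟨⟨k, t⟩, hpmem, hp⟩ := hR (polExp v - polExp u) ⟨v, hvmem, rfl⟩
    obtain ⟨w, hwmem, hw⟩ := hpmem
    obtain ⟨hw', ht⟩ := single_of_pol_sub (hS2 u hu) (hS2 w hwmem.1) hw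
    refine ⟨k, ⟨w, hwmem, hw'⟩, ?_⟩
    show (v - u) k ≠ 0
    have hp' : (polExp v - polExp u) (k, t) ≠ 0 := hp
    rw [polExp_sub_apply] at hp'
    have hc : u k ≤ (t : ℕ) ∧ (t : ℕ) < v k := by
      by_contra hc
      rw [if_neg hc] at hp'
      exact hp' rfl
    rw [Finsupp.tsub_apply]
    omega
end
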